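/- arXiv:1108.3385 — 7 statements merged into one kernel-verified Lean document; each statement's English description precedes it below -/
import Mathlib

section
/- Let d ≥ 1, γ > −1, n ∈ ℕ, let x_1,…,x_N be points of T^d and λ_1,…,λ_N real numbers, and set ξ_k = (x_k, 1−|x_k|_1) ∈ 𝒯^{d+1}. Then the cubature rule w_γ ∫_{T^d} f(x) W_γ(x) dx = Σ_{k=1}^N λ_k f(x_k) holds for every polynomial f ∈ Π_n^d if and only if the rule of index n, w_γ ∫_{𝒯^{d+1}} F(ξ) ξ^γ dξ = Σ_{k=1}^N λ_k F(ξ_k), holds for every homogeneous polynomial F ∈ 𝒫_n^{d+1}. -/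
open MeasureTheory Finset

/-- The standard simplex `T^d` in `ℝ^d`. -/
def Td (d : ℕ) : Set (Fin d → ℝ) :=
  {x | (∀ i, 0 ≤ x i) ∧ ∑ i, x i ≤ 1}

/-- The weight function `W_γ(x) = (x_1 ⋯ x_d (1 - |x|₁))^γ` on `T^d`. -/
noncomputable def Wg (d : ℕ) (γ : ℝ) (x : Fin d → ℝ) : ℝ :=
  ((∏ i, x i) * (1 - ∑ i, x i)) ^ γ

/-- The normalization constant `w_γ = Γ((d+1)(γ+1)) / Γ(γ+1)^(d+1)`. -/
noncomputable def wg (d : ℕ) (γ : ℝ) : ℝ :=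
  Real.Gamma ((d + 1) * (γ + 1)) / (Real.Gamma (γ + 1)) ^ (d + 1)

/-- Homogeneous coordinates: `x ↦ (x, 1 - |x|₁) ∈ 𝒯^{d+1}`. -/
noncomputable def lift (d : ℕ) (x : Fin d → ℝ) : Fin (d + 1) → ℝ :=
  Fin.snoc x (1 - ∑ i, x i)

open MvPolynomial

lemma sum_lift (d : ℕ) (y : Fin d → ℝ) : ∑ j, lift d y j = 1 := by
  rw [Fin.sum_univ_castSucc]
  simp [lift]

/-- The substitution polynomials expressing `ξ = (x, 1-|x|₁)`. -/
noncomputable def phi (d : ℕ) : Fin (d + 1) → MvPolynomial (Fin d) ℝ :=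
  Fin.snoc (fun i => X i) (1 - ∑ i, X i)

lemma eval_phi (d : ℕ) (y : Fin d → ℝ) (j : Fin (d + 1)) :
    MvPolynomial.eval y (phi d j) = lift d y j := by
  induction j using Fin.lastCases with
  | last => simp [phi, lift]
  | cast i => simp [phi, lift]

lemma totalDegree_phi_le (d : ℕ) (j : Fin (d + 1)) : (phi d j).totalDegree ≤ 1 := by
  induction j using Fin.lastCases with
  | last =>
      simp only [phi, Fin.snoc_last]
      refine (totalDegree_sub _ _).trans (max_le ?_ ?_)
      · simp [totalDegree_one]
      · refine (totalDegree_finset_sum _ _).trans (Finset.sup_le fun i _ => ?_)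
        simp [totalDegree_X]
  | cast i => simp [phi, totalDegree_X]

lemma eval_aeval_phi (d : ℕ) (y : Fin d → ℝ) (F : MvPolynomial (Fin (d + 1)) ℝ) :
    MvPolynomial.eval y (MvPolynomial.aeval (phi d) F) = MvPolynomial.eval (lift d y) F := by
  rw [MvPolynomial.aeval_def, algebraMap_eq, ← MvPolynomial.eval_assoc,
    show (⇑(MvPolynomial.eval y) ∘ phi d) = lift d y from funext (eval_phi d y)]

lemma totalDegree_aeval_phi_le (d n : ℕ) (F : MvPolynomial (Fin (d + 1)) ℝ)
    (hF : F.IsHomogeneous n) : (MvPolynomial.aeval (phi d) F).totalDegree ≤ n := by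
  have hrw : MvPolynomial.aeval (phi d) F
      = ∑ m ∈ F.support, MvPolynomial.aeval (phi d) (monomial m (F.coeff m)) := by
    conv_lhs => rw [F.as_sum]
    rw [map_sum]
  rw [hrw]
  refine (totalDegree_finset_sum _ _).trans (Finset.sup_le fun m hm => ?_)
  rw [aeval_monomial]
  refine (totalDegree_mul _ _).trans ?_
  rw [MvPolynomial.algebraMap_eq, totalDegree_C, zero_add]
  have hprod : (m.prod fun i k => phi d i ^ k).totalDegree ≤ m.degree := by
    refine (totalDegree_finset_prod _ _).trans ?_
    refine le_trans (Finset.sum_le_sum fun i _ => ?_) (le_of_eq rfl)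
    refine (totalDegree_pow _ _).trans ?_
    calc m i * (phi d i).totalDegree ≤ m i * 1 :=
          Nat.mul_le_mul_left _ (totalDegree_phi_le d i)
      _ = m i := Nat.mul_one _
  refine hprod.trans (le_of_eq ?_)
  have := hF (MvPolynomial.mem_support_iff.mp hm)
  rw [Finsupp.degree_eq_weight_one]
  exact this

/-- Homogenization of a polynomial of degree at most `n`. -/
noncomputable def homog (d n : ℕ) (f : MvPolynomial (Fin d) ℝ) :
    MvPolynomial (Fin (d + 1)) ℝ :=
  ∑ m ∈ f.support,
    rename Fin.castSucc (monomial m (f.coeff m)) * (∑ j, X j) ^ (n - m.degree)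

lemma homog_isHomogeneous (d n : ℕ) (f : MvPolynomial (Fin d) ℝ)
    (hf : f.totalDegree ≤ n) : (homog d n f).IsHomogeneous n := by
  refine IsHomogeneous.sum _ _ _ fun m hm => ?_
  have h1 : (rename (Fin.castSucc (n := d)) (monomial m (f.coeff m))).IsHomogeneous m.degree :=
    (isHomogeneous_monomial _ rfl).rename_isHomogeneous
  have h2 : ((∑ j, (X j : MvPolynomial (Fin (d + 1)) ℝ)) ^ (n - m.degree)).IsHomogeneous
      (n - m.degree) := by
    have hs : (∑ j, (X j : MvPolynomial (Fin (d + 1)) ℝ)).IsHomogeneous 1 :=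
      IsHomogeneous.sum _ _ _ fun j _ => isHomogeneous_X _ _
    simpa using hs.pow (n - m.degree)
  have hle : m.degree ≤ n := by
    have := MvPolynomial.le_totalDegree hm
    rw [Finsupp.degree]
    exact le_trans this hf
  have := h1.mul h2
  rwa [Nat.add_sub_cancel' hle] at this

lemma eval_homog (d n : ℕ) (f : MvPolynomial (Fin d) ℝ) (y : Fin d → ℝ) :
    MvPolynomial.eval (lift d y) (homog d n f) = MvPolynomial.eval y f := by
  rw [homog, map_sum]
  have hterm : ∀ m ∈ f.support,
      MvPolynomial.eval (lift d y)
        (rename Fin.castSucc (monomial m (f.coeff m)) * (∑ j, X j) ^ (n - m.degree))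
      = MvPolynomial.eval y (monomial m (f.coeff m)) := by
    intro m hm
    rw [map_mul, map_pow, eval_sum]
    simp only [eval_X]
    rw [sum_lift, one_pow, mul_one, eval_rename,
      show (lift d y ∘ Fin.castSucc) = y from funext fun i => by simp [lift]]
  rw [Finset.sum_congr rfl hterm]
  conv_rhs => rw [f.as_sum]
  rw [map_sum]

/-- A cubature rule of degree `n` for `W_γ` on `T^d`, with all nodes in `T^d`, holds for all
polynomials of degree at most `n` iff the corresponding rule of index `n` on `𝒯^{d+1}`
(with `ξ_k = (x_k, 1 - |x_k|₁)`) holds for all homogeneous polynomials of degree `n`. -/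
theorem cubature_simplex_degree_iff_index
    (d N n : ℕ) (hd : 1 ≤ d) (γ : ℝ) (hγ : -1 < γ)
    (x : Fin N → (Fin d → ℝ)) (hx : ∀ k, x k ∈ Td d) (lam : Fin N → ℝ) :
    (∀ f : MvPolynomial (Fin d) ℝ, f.totalDegree ≤ n →
      wg d γ * ∫ y in Td d, MvPolynomial.eval y f * Wg d γ y
        = ∑ k, lam k * MvPolynomial.eval (x k) f)
    ↔
    (∀ F : MvPolynomial (Fin (d + 1)) ℝ, F.IsHomogeneous n →
      wg d γ * ∫ y in Td d, MvPolynomial.eval (lift d y) F * Wg d γ y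
        = ∑ k, lam k * MvPolynomial.eval (lift d (x k)) F) := by
  constructor
  · intro h F hF
    have := h (MvPolynomial.aeval (phi d) F) (totalDegree_aeval_phi_le d n F hF)
    simp only [eval_aeval_phi] at this
    exact this
  · intro h f hf
    have := h (homog d n f) (homog_isHomogeneous d n f hf)
    simp only [eval_homog] at this
    exact this
end

section
/- Let t ≥ 1 and let x_1,…,x_M ∈ S^d be pairwise non-antipodal points (x_i ≠ −x_j for i ≠ j) with weights λ_1,…,λ_M such that (1/σ(S^d)) ∫_{S^d} f dσ = Σ_{k=1}^M λ_k f(x_k) for every homogeneous polynomial f of degree 2t in d+1 variables. Then (1/σ(S^d)) ∫_{S^d} f dσ = Σ_{k=1}^M (λ_k/2)(f(x_k)+f(−x_k)) for every polynomial f of degree at most 2t+1 in d+1 variables. Conversely, if (1/σ(S^d)) ∫_{S^d} f dσ = Σ_{k=1}^M μ_k (f(x_k)+f(−x_k)) for every polynomial f of degree at most 2t+1, then (1/σ(S^d)) ∫_{S^d} f dσ = Σ_{k=1}^M 2μ_k f(x_k) for every homogeneous polynomial f of degree 2t. -/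
open MeasureTheory Finset

lemma eval_mul_of_isHomogeneous {σ : Type*} {n : ℕ} {f : MvPolynomial σ ℝ}
    (hf : f.IsHomogeneous n) (c : ℝ) (y : σ → ℝ) :
    MvPolynomial.eval (fun i => c * y i) f = c ^ n * MvPolynomial.eval y f := by
  rw [MvPolynomial.eval_eq, MvPolynomial.eval_eq, Finset.mul_sum]
  refine Finset.sum_congr rfl fun m hm => ?_
  have hdeg : ∑ i ∈ m.support, m i = n := by
    have h := hf (MvPolynomial.mem_support_iff.mp hm)
    simpa [Finsupp.weight_apply, Finsupp.sum] using h
  calc MvPolynomial.coeff m f * ∏ i ∈ m.support, (c * y i) ^ m i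
      = MvPolynomial.coeff m f *
        ((∏ i ∈ m.support, c ^ m i) * ∏ i ∈ m.support, y i ^ m i) := by
        rw [← Finset.prod_mul_distrib]
        simp [mul_pow]
    _ = c ^ n * (MvPolynomial.coeff m f * ∏ i ∈ m.support, y i ^ m i) := by
        rw [Finset.prod_pow_eq_pow_sum, hdeg]; ring

lemma eval_neg_of_isHomogeneous {σ : Type*} {n : ℕ} {f : MvPolynomial σ ℝ}
    (hf : f.IsHomogeneous n) (y : σ → ℝ) :
    MvPolynomial.eval (fun i => -(y i)) f = (-1) ^ n * MvPolynomial.eval y f := by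
  simpa using eval_mul_of_isHomogeneous hf (-1) y

lemma sum_one_add_neg_one_pow (m : ℕ) (e : ℕ → ℝ) :
    ∑ j ∈ range (2 * m), (1 + (-1 : ℝ) ^ j) * e j = 2 * ∑ s ∈ range m, e (2 * s) := by
  induction m with
  | zero => simp
  | succ k ih =>
    have h2 : 2 * (k + 1) = (2 * k) + 1 + 1 := by ring
    rw [h2, Finset.sum_range_succ, Finset.sum_range_succ, ih, Finset.sum_range_succ]
    have he : ((-1 : ℝ)) ^ (2 * k) = 1 := by rw [pow_mul]; norm_num
    have ho : ((-1 : ℝ)) ^ (2 * k + 1) = -1 := by rw [pow_succ, he]; ring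
    rw [he, ho]; ring

lemma sum_sq_of_mem_sphere {d : ℕ} {y : EuclideanSpace ℝ (Fin (d + 1))}
    (hy : y ∈ Metric.sphere (0 : EuclideanSpace ℝ (Fin (d + 1))) 1) :
    ∑ i, (y i) ^ 2 = 1 := by
  have h : ‖y‖ = 1 := by simpa using hy
  rw [EuclideanSpace.norm_eq] at h
  have h2 : ∑ i, ‖y i‖ ^ 2 = 1 := Real.sqrt_eq_one.mp h
  simpa [Real.norm_eq_abs, sq_abs] using h2

lemma setIntegral_sphere_neg {d : ℕ} (F : EuclideanSpace ℝ (Fin (d + 1)) → ℝ) :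
    ∫ y in Metric.sphere (0 : EuclideanSpace ℝ (Fin (d + 1))) 1, F (-y) ∂μH[(d : ℝ)]
      = ∫ y in Metric.sphere (0 : EuclideanSpace ℝ (Fin (d + 1))) 1, F y ∂μH[(d : ℝ)] := by
  set S := Metric.sphere (0 : EuclideanSpace ℝ (Fin (d + 1))) 1 with hS
  set e := (LinearIsometryEquiv.neg ℝ (E := EuclideanSpace ℝ (Fin (d + 1)))).toIsometryEquiv
  have hmap : Measure.map (fun y : EuclideanSpace ℝ (Fin (d + 1)) => -y) μH[(d : ℝ)]
      = μH[(d : ℝ)] := by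
    have := e.map_hausdorffMeasure (d : ℝ)
    simpa [e] using this
  have hmp : MeasurePreserving (fun y : EuclideanSpace ℝ (Fin (d + 1)) => -y)
      μH[(d : ℝ)] μH[(d : ℝ)] := ⟨continuous_neg.measurable, hmap⟩
  have hemb : MeasurableEmbedding (fun y : EuclideanSpace ℝ (Fin (d + 1)) => -y) := by
    have := e.toHomeomorph.measurableEmbedding
    simpa [e] using this
  have hpre : (fun y : EuclideanSpace ℝ (Fin (d + 1)) => -y) ⁻¹' S = S := by
    ext z
    simp [hS]
  calc ∫ y in S, F (-y) ∂μH[(d : ℝ)]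
      = ∫ y in (fun y : EuclideanSpace ℝ (Fin (d + 1)) => -y) ⁻¹' S, F (-y) ∂μH[(d : ℝ)] := by
        rw [hpre]
    _ = ∫ y in S, F y ∂μH[(d : ℝ)] := hmp.setIntegral_preimage_emb hemb F S

/-- For pairwise non-antipodal points on `S^d`: a cubature rule of index `2t` extends to a
centrally symmetric cubature rule of degree `2t+1`, and conversely a centrally symmetric
cubature rule of degree `2t+1` reduces to a cubature rule of index `2t`. -/
theorem cubature_index_iff_centrally_symmetric
    (d M t : ℕ) (ht : 1 ≤ t)
    (x : Fin M → EuclideanSpace ℝ (Fin (d + 1)))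
    (hx : ∀ k, x k ∈ Metric.sphere (0 : EuclideanSpace ℝ (Fin (d + 1))) 1)
    (hpodal : ∀ i j, i ≠ j → x i ≠ -x j) :
    (∀ lam : Fin M → ℝ,
      (∀ f : MvPolynomial (Fin (d + 1)) ℝ, f.IsHomogeneous (2 * t) →
        (μH[(d : ℝ)] (Metric.sphere (0 : EuclideanSpace ℝ (Fin (d + 1))) 1)).toReal⁻¹ *
            ∫ y in Metric.sphere (0 : EuclideanSpace ℝ (Fin (d + 1))) 1,
              MvPolynomial.eval (fun i => y i) f ∂μH[(d : ℝ)]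
          = ∑ k, lam k * MvPolynomial.eval (fun i => x k i) f) →
      (∀ f : MvPolynomial (Fin (d + 1)) ℝ, f.totalDegree ≤ 2 * t + 1 →
        (μH[(d : ℝ)] (Metric.sphere (0 : EuclideanSpace ℝ (Fin (d + 1))) 1)).toReal⁻¹ *
            ∫ y in Metric.sphere (0 : EuclideanSpace ℝ (Fin (d + 1))) 1,
              MvPolynomial.eval (fun i => y i) f ∂μH[(d : ℝ)]
          = ∑ k, (lam k / 2) *
              (MvPolynomial.eval (fun i => x k i) f + MvPolynomial.eval (fun i => -(x k i)) f)))
    ∧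
    (∀ mu : Fin M → ℝ,
      (∀ f : MvPolynomial (Fin (d + 1)) ℝ, f.totalDegree ≤ 2 * t + 1 →
        (μH[(d : ℝ)] (Metric.sphere (0 : EuclideanSpace ℝ (Fin (d + 1))) 1)).toReal⁻¹ *
            ∫ y in Metric.sphere (0 : EuclideanSpace ℝ (Fin (d + 1))) 1,
              MvPolynomial.eval (fun i => y i) f ∂μH[(d : ℝ)]
          = ∑ k, mu k *
              (MvPolynomial.eval (fun i => x k i) f + MvPolynomial.eval (fun i => -(x k i)) f)) →
      (∀ f : MvPolynomial (Fin (d + 1)) ℝ, f.IsHomogeneous (2 * t) →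
        (μH[(d : ℝ)] (Metric.sphere (0 : EuclideanSpace ℝ (Fin (d + 1))) 1)).toReal⁻¹ *
            ∫ y in Metric.sphere (0 : EuclideanSpace ℝ (Fin (d + 1))) 1,
              MvPolynomial.eval (fun i => y i) f ∂μH[(d : ℝ)]
          = ∑ k, 2 * mu k * MvPolynomial.eval (fun i => x k i) f)) := by
  set S := Metric.sphere (0 : EuclideanSpace ℝ (Fin (d + 1))) 1 with hSdef
  set μ : Measure (EuclideanSpace ℝ (Fin (d + 1))) := μH[(d : ℝ)] with hμdef
  constructor
  · -- forward direction
    intro lam hidx f hdeg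
    -- the even companion polynomial
    set g : MvPolynomial (Fin (d + 1)) ℝ :=
      ∑ s ∈ range (t + 1), MvPolynomial.homogeneousComponent (2 * s) f *
        (∑ i, MvPolynomial.X i ^ 2) ^ (t - s) with hgdef
    have hsq : ((∑ i, MvPolynomial.X i ^ 2 : MvPolynomial (Fin (d + 1)) ℝ)).IsHomogeneous 2 :=
      MvPolynomial.IsHomogeneous.sum _ _ _ (fun i _ => MvPolynomial.isHomogeneous_X_pow i 2)
    have hg : g.IsHomogeneous (2 * t) := by
      apply MvPolynomial.IsHomogeneous.sum
      intro s hs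
      have h1 := (MvPolynomial.homogeneousComponent_isHomogeneous (2 * s) f).mul
        (hsq.pow (t - s))
      have h2 : 2 * s + 2 * (t - s) = 2 * t := by
        simp only [Finset.mem_range] at hs; omega
      rwa [h2] at h1
    have hfsum : ∑ j ∈ range (2 * t + 2), MvPolynomial.homogeneousComponent j f = f := by
      conv_rhs => rw [← MvPolynomial.sum_homogeneousComponent f]
      refine (Finset.sum_subset ?_ ?_).symm
      · intro j hj
        simp only [Finset.mem_range] at hj ⊢
        omega
      · intro j hj hnj
        refine MvPolynomial.homogeneousComponent_eq_zero _ _ ?_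
        simp only [Finset.mem_range] at hj hnj
        omega
    have hkey : ∀ y : Fin (d + 1) → ℝ, (∑ i, y i ^ 2 = 1) →
        MvPolynomial.eval y f + MvPolynomial.eval (fun i => -(y i)) f
          = 2 * MvPolynomial.eval y g := by
      intro y hy
      have hL : MvPolynomial.eval y f + MvPolynomial.eval (fun i => -(y i)) f
          = ∑ j ∈ range (2 * t + 2),
              (1 + (-1 : ℝ) ^ j) * MvPolynomial.eval y (MvPolynomial.homogeneousComponent j f) := by
        conv_lhs => rw [← hfsum]
        rw [map_sum, map_sum, ← Finset.sum_add_distrib]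
        refine Finset.sum_congr rfl fun j _ => ?_
        rw [eval_neg_of_isHomogeneous (MvPolynomial.homogeneousComponent_isHomogeneous j f)]
        ring
      have hR : MvPolynomial.eval y g
          = ∑ s ∈ range (t + 1),
              MvPolynomial.eval y (MvPolynomial.homogeneousComponent (2 * s) f) := by
        rw [hgdef, map_sum]
        refine Finset.sum_congr rfl fun s _ => ?_
        rw [map_mul, map_pow]
        have h1 : MvPolynomial.eval y (∑ i, MvPolynomial.X i ^ 2) = 1 := by
          rw [map_sum]
          simpa using hy
        rw [h1, one_pow, mul_one]
      rw [hL, hR]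
      have h22 : 2 * t + 2 = 2 * (t + 1) := by ring
      rw [h22, sum_one_add_neg_one_pow]
    have hsum : ∑ k, (lam k / 2) *
          (MvPolynomial.eval (fun i => x k i) f + MvPolynomial.eval (fun i => -(x k i)) f)
        = ∑ k, lam k * MvPolynomial.eval (fun i => x k i) g := by
      refine Finset.sum_congr rfl fun k _ => ?_
      have hx1 : ∑ i, (x k i) ^ 2 = 1 := sum_sq_of_mem_sphere (hx k)
      have := hkey (fun i => x k i) hx1
      rw [this]; ring
    have hFG : (μ S).toReal⁻¹ * ∫ y in S, MvPolynomial.eval (fun i => y i) f ∂μ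
        = (μ S).toReal⁻¹ * ∫ y in S, MvPolynomial.eval (fun i => y i) g ∂μ := by
      by_cases hzero : (μ S).toReal = 0
      · rw [hzero, inv_zero, zero_mul, zero_mul]
      · have hSfin : μ S ≠ ⊤ := by
          intro h
          rw [h] at hzero
          simp at hzero
        haveI : IsFiniteMeasure (μ.restrict S) :=
          ⟨by rw [Measure.restrict_apply_univ]; exact lt_top_iff_ne_top.2 hSfin⟩
        congr 1
        have hcoord : Continuous fun (y : EuclideanSpace ℝ (Fin (d + 1))) (i : Fin (d + 1)) =>
            y i := continuous_pi fun i => (EuclideanSpace.proj i :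
              EuclideanSpace ℝ (Fin (d + 1)) →L[ℝ] ℝ).continuous
        have hFcont : Continuous fun (y : EuclideanSpace ℝ (Fin (d + 1))) =>
            MvPolynomial.eval (fun i => y i) f :=
          (MvPolynomial.continuous_eval (p := f)).comp hcoord
        have hGcont : Continuous fun (y : EuclideanSpace ℝ (Fin (d + 1))) =>
            MvPolynomial.eval (fun i => y i) g :=
          (MvPolynomial.continuous_eval (p := g)).comp hcoord
        obtain ⟨C, hC⟩ := (isCompact_sphere (0 : EuclideanSpace ℝ (Fin (d + 1))) 1
          ).exists_bound_of_continuousOn hFcont.continuousOn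
        have hintF : IntegrableOn (fun y => MvPolynomial.eval (fun i => y i) f) S μ := by
          refine Integrable.mono' (integrable_const C) hFcont.aestronglyMeasurable ?_
          exact (ae_restrict_iff' (Metric.isClosed_sphere.measurableSet)).2 (ae_of_all _ hC)
        have hintFN : IntegrableOn
            (fun y => MvPolynomial.eval (fun i => (-y) i) f) S μ := by
          refine Integrable.mono' (integrable_const C)
            ((hFcont.comp continuous_neg).aestronglyMeasurable) ?_
          refine (ae_restrict_iff' (Metric.isClosed_sphere.measurableSet)).2 (ae_of_all _ ?_)
          intro y hy
          exact hC (-y) (by simpa [hSdef] using hy)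
        have h1 : ∫ y in S, MvPolynomial.eval (fun i => (-y) i) f ∂μ
            = ∫ y in S, MvPolynomial.eval (fun i => y i) f ∂μ :=
          setIntegral_sphere_neg (fun y => MvPolynomial.eval (fun i => y i) f)
        have h2 : (2 : ℝ) * ∫ y in S, MvPolynomial.eval (fun i => y i) f ∂μ
            = ∫ y in S, (MvPolynomial.eval (fun i => y i) f
                + MvPolynomial.eval (fun i => (-y) i) f) ∂μ := by
          rw [integral_add hintF hintFN, h1]; ring
        have h3 : ∫ y in S, (MvPolynomial.eval (fun i => y i) f
              + MvPolynomial.eval (fun i => (-y) i) f) ∂μ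
            = ∫ y in S, 2 * MvPolynomial.eval (fun i => y i) g ∂μ := by
          refine setIntegral_congr_fun (Metric.isClosed_sphere.measurableSet) fun y hy => ?_
          have hy1 : ∑ i, (y i) ^ 2 = 1 := sum_sq_of_mem_sphere (by simpa [hSdef] using hy)
          have := hkey (fun i => y i) hy1
          simpa using this
        have h4 : ∫ y in S, 2 * MvPolynomial.eval (fun i => y i) g ∂μ
            = 2 * ∫ y in S, MvPolynomial.eval (fun i => y i) g ∂μ :=
          integral_const_mul 2 _
        have := h2.trans (h3.trans h4)
        linarith
    calc (μ S).toReal⁻¹ * ∫ y in S, MvPolynomial.eval (fun i => y i) f ∂μ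
        = (μ S).toReal⁻¹ * ∫ y in S, MvPolynomial.eval (fun i => y i) g ∂μ := hFG
      _ = ∑ k, lam k * MvPolynomial.eval (fun i => x k i) g := hidx g hg
      _ = ∑ k, (lam k / 2) *
            (MvPolynomial.eval (fun i => x k i) f
              + MvPolynomial.eval (fun i => -(x k i)) f) := hsum.symm
  · -- reverse direction
    intro mu hsym f hf
    have hdeg : f.totalDegree ≤ 2 * t + 1 := hf.totalDegree_le.trans (Nat.le_succ _)
    have h := hsym f hdeg
    rw [h]
    refine Finset.sum_congr rfl fun k _ => ?_
    have hneg : MvPolynomial.eval (fun i => -(x k i)) f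
        = MvPolynomial.eval (fun i => x k i) f := by
      rw [eval_neg_of_isHomogeneous hf]
      have : ((-1 : ℝ)) ^ (2 * t) = 1 := by rw [pow_mul]; norm_num
      rw [this, one_mul]
    rw [hneg]; ring
end

section
/- Let d ≥ 2, t ≥ 1 and N ≥ 1. The following are equivalent: (i) there exist points x_1,…,x_N ∈ S^{d−1} and nonnegative weights λ_1,…,λ_N such that (1/σ(S^{d−1})) ∫_{S^{d−1}} f dσ = Σ_{i=1}^N λ_i f(x_i) for every homogeneous polynomial f of degree 2t in d variables; (ii) there exist vectors r_1,…,r_N ∈ ℝ^d such that Σ_{i=1}^N ⟨x, r_i⟩^{2t} = ⟨x, x⟩^t for every x ∈ ℝ^d, where ⟨·,·⟩ is the Euclidean inner product. -/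
open MeasureTheory Finset
open Metric RealInnerProductSpace

lemma powexp (d : ℕ) (y : Fin d → ℝ) (n : ℕ) :
    ((∑ j, MvPolynomial.C (y j) * MvPolynomial.X j : MvPolynomial (Fin d) ℝ)) ^ n
    = ∑ k ∈ piAntidiag univ n,
        ((Nat.multinomial univ k : ℝ) * (∏ j, y j ^ k j)) •
          ∏ j, (MvPolynomial.X j : MvPolynomial (Fin d) ℝ) ^ k j := by
  rw [Finset.sum_pow_eq_sum_piAntidiag]
  refine Finset.sum_congr rfl fun k _ => ?_
  simp only [mul_pow, ← map_pow, Finset.prod_mul_distrib, ← map_prod,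
    MvPolynomial.smul_eq_C_mul, map_mul, map_natCast]
  ring

lemma span_lemma (d n : ℕ) (L : MvPolynomial (Fin d) ℝ →ₗ[ℝ] ℝ)
    (h : ∀ y : Fin d → ℝ,
      L ((∑ j, MvPolynomial.C (y j) * MvPolynomial.X j) ^ n) = 0)
    {f : MvPolynomial (Fin d) ℝ} (hf : f.IsHomogeneous n) : L f = 0 := by
  classical
  have key : ∀ k : Fin d → ℕ, k ∈ piAntidiag univ n →
      L (∏ j, MvPolynomial.X j ^ k j) = 0 := by
    set P : MvPolynomial (Fin d) ℝ :=
      ∑ k ∈ piAntidiag univ n, MvPolynomial.monomial (Finsupp.equivFunOnFinite.symm k)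
        ((Nat.multinomial univ k : ℝ) * L (∏ j, MvPolynomial.X j ^ k j)) with hPdef
    have hP : ∀ y : Fin d → ℝ, MvPolynomial.eval y P = 0 := by
      intro y
      have hy := h y
      rw [powexp, map_sum] at hy
      simp only [_root_.map_smul, smul_eq_mul] at hy
      rw [hPdef, map_sum]
      rw [← hy]
      refine Finset.sum_congr rfl fun k _ => ?_
      rw [MvPolynomial.eval_monomial]
      rw [Finsupp.prod_fintype _ _ (fun i => pow_zero (y i))]
      simp only [Finsupp.coe_equivFunOnFinite_symm]
      ring
    have hP0 : P = 0 := by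
      apply MvPolynomial.funext; intro x; rw [hP x]; simp
    intro k hk
    have hc := congrArg (MvPolynomial.coeff (Finsupp.equivFunOnFinite.symm k)) hP0
    rw [hPdef] at hc
    rw [MvPolynomial.coeff_sum] at hc
    simp only [MvPolynomial.coeff_monomial, MvPolynomial.coeff_zero] at hc
    rw [Finset.sum_eq_single k] at hc
    · rw [if_pos rfl] at hc
      have hmult : (Nat.multinomial univ k : ℝ) ≠ 0 := by
        exact_mod_cast (Nat.multinomial_pos univ k).ne'
      exact (mul_eq_zero.mp hc).resolve_left hmult
    · intro b _ hbk
      rw [if_neg (fun hh => hbk (Finsupp.equivFunOnFinite.symm.injective hh))]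
    · intro hkk; exact absurd hk hkk
  rw [f.as_sum, map_sum]
  refine Finset.sum_eq_zero fun m hm => ?_
  have hdeg : (∑ j, m j) = n := by
    have := hf (MvPolynomial.mem_support_iff.mp hm)
    rw [← this]
    simp [Finsupp.weight_apply, Finsupp.sum_fintype]
  have hmem : (⇑m : Fin d → ℕ) ∈ piAntidiag univ n := by
    rw [mem_piAntidiag]
    exact ⟨hdeg, fun i _ => mem_univ i⟩
  have hmon : MvPolynomial.monomial m (MvPolynomial.coeff m f)
      = MvPolynomial.coeff m f • ∏ j, MvPolynomial.X j ^ m j := by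
    rw [← Finset.prod_subset (Finset.subset_univ m.support)
      (fun x _ hx => by rw [Finsupp.notMem_support_iff.mp hx, pow_zero])]
    rw [MvPolynomial.prod_X_pow_eq_monomial, MvPolynomial.smul_monomial, smul_eq_mul, mul_one]
  rw [hmon, _root_.map_smul, smul_eq_mul]
  have := key (⇑m) hmem
  rw [this, mul_zero]

-- F0: bounded sets in Euclidean m-space have finite μH[m]
lemma bounded_hausdorff_lt_top (m : ℕ) (A : Set (EuclideanSpace ℝ (Fin m)))
    (hA : Bornology.IsBounded A) : μH[(m:ℝ)] A < ⊤ := by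
  classical
  set f : (Fin m → ℝ) → EuclideanSpace ℝ (Fin m) :=
    fun x => (EuclideanSpace.equiv (Fin m) ℝ).symm x with hf
  have hlip : ∃ K : NNReal, LipschitzWith K f := by
    refine ⟨_, (EuclideanSpace.equiv (Fin m) ℝ).symm.lipschitz⟩
  obtain ⟨K, hK⟩ := hlip
  have himg : A = f '' (f ⁻¹' A) := by
    rw [Set.image_preimage_eq]
    exact (EuclideanSpace.equiv (Fin m) ℝ).symm.surjective
  rw [himg]
  calc μH[(m:ℝ)] (f '' (f ⁻¹' A)) ≤ (K:ENNReal)^(m:ℝ) * μH[(m:ℝ)] (f ⁻¹' A) :=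
        hK.hausdorffMeasure_image_le (by positivity) _
    _ < ⊤ := by
        refine ENNReal.mul_lt_top (ENNReal.rpow_lt_top_of_nonneg (by positivity)
          ENNReal.coe_ne_top) ?_
        have : μH[(m:ℝ)] (f ⁻¹' A) = volume (f ⁻¹' A) := by
          have := MeasureTheory.hausdorffMeasure_pi_real (ι := Fin m)
          rw [show ((m:ℝ)) = ((Fintype.card (Fin m) : ℕ) : ℝ) by simp, ← this]
        rw [this]
        have hb : Bornology.IsBounded (f ⁻¹' A) := by
          obtain ⟨R, hR⟩ := hA.subset_closedBall 0
          set g := ((EuclideanSpace.equiv (Fin m) ℝ) : EuclideanSpace ℝ (Fin m) →L[ℝ] (Fin m → ℝ))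
          have hsub : f ⁻¹' A ⊆ Metric.closedBall 0 (‖g‖ * R) := by
            intro x hx
            rw [Metric.mem_closedBall, dist_zero_right]
            have hx' : f x ∈ Metric.closedBall (0 : EuclideanSpace ℝ (Fin m)) R := hR hx
            rw [Metric.mem_closedBall, dist_zero_right] at hx'
            have : x = g (f x) := rfl
            rw [this]
            calc ‖g (f x)‖ ≤ ‖g‖ * ‖f x‖ := g.le_opNorm _
              _ ≤ ‖g‖ * R := by
                  exact mul_le_mul_of_nonneg_left hx' (norm_nonneg _)
          exact Bornology.IsBounded.subset Metric.isBounded_closedBall hsub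
        exact hb.measure_lt_top

lemma abs_coord_le_norm {n : ℕ} (z : EuclideanSpace ℝ (Fin n)) (i : Fin n) :
    |z i| ≤ ‖z‖ := by
  rw [EuclideanSpace.norm_eq]
  rw [show |z i| = Real.sqrt (‖z i‖^2) by
    rw [Real.norm_eq_abs, sq_abs, Real.sqrt_sq_eq_abs]]
  apply Real.sqrt_le_sqrt
  exact Finset.single_le_sum (fun j _ => sq_nonneg ‖z j‖) (Finset.mem_univ i)

lemma sphere_hausdorff_pos (m : ℕ) (hm : 1 ≤ m) :
    0 < μH[(m:ℝ)] (Metric.sphere (0 : EuclideanSpace ℝ (Fin (m+1))) 1) := by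
  classical
  set p : EuclideanSpace ℝ (Fin (m+1)) → (Fin m → ℝ) :=
    fun y i => y i.castSucc with hp
  have hlip : LipschitzWith 1 p := by
    apply LipschitzWith.of_dist_le_mul
    intro x y
    simp only [NNReal.coe_one, one_mul]
    rw [dist_pi_le_iff dist_nonneg]
    intro i
    have : x i.castSucc - y i.castSucc = (x - y) i.castSucc := rfl
    rw [Real.dist_eq, this]
    calc |(x - y) i.castSucc| ≤ ‖x - y‖ := abs_coord_le_norm _ _
      _ = dist x y := (dist_eq_norm _ _).symm
  set r : ℝ := Real.sqrt (1/m) with hr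
  have hrpos : 0 < r := Real.sqrt_pos.mpr (by positivity)
  have hsub : Metric.closedBall (0 : Fin m → ℝ) r ⊆
      p '' (Metric.sphere (0 : EuclideanSpace ℝ (Fin (m+1))) 1) := by
    intro u hu
    have hcoord : ∀ i, |u i| ≤ r := by
      intro i
      rw [mem_closedBall_zero_iff] at hu
      calc |u i| = ‖u i‖ := rfl
        _ ≤ ‖u‖ := norm_le_pi_norm u i
        _ ≤ r := hu
    have hsum : (∑ i, u i ^ 2) ≤ 1 := by
      calc (∑ i, u i ^ 2) ≤ ∑ _i : Fin m, (1/m : ℝ) := by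
            refine Finset.sum_le_sum fun i _ => ?_
            have := hcoord i
            calc u i ^ 2 = |u i|^2 := (sq_abs _).symm
              _ ≤ r ^ 2 := by nlinarith [abs_nonneg (u i)]
              _ = 1/m := Real.sq_sqrt (by positivity)
        _ = 1 := by
            rw [Finset.sum_const, Finset.card_univ, Fintype.card_fin, nsmul_eq_mul]
            field_simp
    set c : ℝ := Real.sqrt (1 - ∑ i, u i ^ 2) with hc
    set y : EuclideanSpace ℝ (Fin (m+1)) :=
      WithLp.toLp 2 (fun i => Fin.lastCases c (fun i' => u i') i : Fin (m+1) → ℝ) with hy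
    refine ⟨y, ?_, ?_⟩
    · rw [mem_sphere_zero_iff_norm, EuclideanSpace.norm_eq]
      rw [Fin.sum_univ_castSucc]
      have h1 : ∀ i : Fin m, ‖y i.castSucc‖ ^ 2 = u i ^ 2 := by
        intro i
        rw [hy]
        simp only [Fin.lastCases_castSucc]
        rw [Real.norm_eq_abs, sq_abs]
      have h2 : ‖y (Fin.last m)‖ ^ 2 = 1 - ∑ i, u i ^ 2 := by
        rw [hy]
        simp only [Fin.lastCases_last]
        rw [Real.norm_eq_abs, sq_abs, hc, Real.sq_sqrt (by linarith)]
      rw [Finset.sum_congr rfl (fun i _ => h1 i), h2]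
      rw [show (∑ i, u i ^ 2) + (1 - ∑ i, u i ^ 2) = 1 by ring, Real.sqrt_one]
    · funext i
      rw [hp, hy]
      simp [Fin.lastCases_castSucc]
  have hcube : (0:ENNReal) < μH[(m:ℝ)] (Metric.closedBall (0 : Fin m → ℝ) r) := by
    have hvol : μH[(m:ℝ)] (Metric.closedBall (0 : Fin m → ℝ) r)
        = volume (Metric.closedBall (0 : Fin m → ℝ) r) := by
      rw [show ((m:ℝ)) = ((Fintype.card (Fin m) : ℕ) : ℝ) by simp,
        MeasureTheory.hausdorffMeasure_pi_real]
    rw [hvol]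
    exact measure_closedBall_pos _ _ hrpos
  have himg := hlip.hausdorffMeasure_image_le (show (0:ℝ) ≤ m by positivity)
      (Metric.sphere (0 : EuclideanSpace ℝ (Fin (m+1))) 1)
  have h1 : μH[(m:ℝ)] (Metric.closedBall (0 : Fin m → ℝ) r)
      ≤ μH[(m:ℝ)] (p '' (Metric.sphere (0 : EuclideanSpace ℝ (Fin (m+1))) 1)) :=
    measure_mono hsub
  calc (0:ENNReal) < μH[(m:ℝ)] (Metric.closedBall (0 : Fin m → ℝ) r) := hcube
    _ ≤ μH[(m:ℝ)] (p '' (Metric.sphere (0 : EuclideanSpace ℝ (Fin (m+1))) 1)) := h1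
    _ ≤ (1:NNReal)^(m:ℝ) * μH[(m:ℝ)] (Metric.sphere (0 : EuclideanSpace ℝ (Fin (m+1))) 1) := himg
    _ = μH[(m:ℝ)] (Metric.sphere (0 : EuclideanSpace ℝ (Fin (m+1))) 1) := by
        rw [ENNReal.coe_one, ENNReal.one_rpow, one_mul]

section graph
variable (m : ℕ)

noncomputable def hfun (v : EuclideanSpace ℝ (Fin m)) : ℝ := Real.sqrt (1 - ‖v‖^2)

noncomputable def graphMap (ε : ℝ) (v : EuclideanSpace ℝ (Fin m)) :
    EuclideanSpace ℝ (Fin (m+1)) :=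
  WithLp.toLp 2 (fun i => Fin.lastCases (ε * hfun m v) (fun i' => v i') i : Fin (m+1) → ℝ)

def capDom : Set (EuclideanSpace ℝ (Fin m)) :=
  {v | ‖v‖^2 ≤ 1 - 1/(m+1)}

lemma capDom_bounded : Bornology.IsBounded (capDom m) := by
  refine Bornology.IsBounded.subset (Metric.isBounded_closedBall (x := (0:EuclideanSpace ℝ (Fin m))) (r := 1)) ?_
  intro v hv
  rw [Metric.mem_closedBall, dist_zero_right]
  have : ‖v‖^2 ≤ 1 - 1/(m+1) := hv
  have h2 : (0:ℝ) < 1/(m+1) := by positivity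
  nlinarith [norm_nonneg v]

lemma hfun_lipschitz {u v : EuclideanSpace ℝ (Fin m)} (hu : u ∈ capDom m)
    (hv : v ∈ capDom m) :
    |hfun m u - hfun m v| ≤ Real.sqrt (m+1) * dist u v := by
  set δ : ℝ := 1/(m+1) with hδ
  have hδpos : 0 < δ := by positivity
  set a : ℝ := 1 - ‖u‖^2 with hA
  set b : ℝ := 1 - ‖v‖^2 with hB
  have ha : δ ≤ a := by have : ‖u‖^2 ≤ 1 - δ := hu; simp only [hA]; linarith
  have hb : δ ≤ b := by have : ‖v‖^2 ≤ 1 - δ := hv; simp only [hB]; linarith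
  have hu1 : ‖u‖ ≤ 1 := by nlinarith [norm_nonneg u]
  have hv1 : ‖v‖ ≤ 1 := by nlinarith [norm_nonneg v]
  have key : |Real.sqrt a - Real.sqrt b| * (Real.sqrt a + Real.sqrt b) = |a - b| := by
    rw [← abs_of_nonneg (by positivity : (0:ℝ) ≤ Real.sqrt a + Real.sqrt b), ← abs_mul]
    congr 1
    have h1 : Real.sqrt a ^ 2 = a := Real.sq_sqrt (by linarith)
    have h2 : Real.sqrt b ^ 2 = b := Real.sq_sqrt (by linarith)
    nlinarith [h1, h2]
  have hab : |a - b| ≤ 2 * dist u v := by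
    have hinner : (⟪u + v, u - v⟫) = ‖u‖^2 - ‖v‖^2 := by
      rw [inner_add_left, inner_sub_right, inner_sub_right, real_inner_comm v u,
        real_inner_self_eq_norm_sq, real_inner_self_eq_norm_sq]
      ring
    have hcs := abs_real_inner_le_norm (u + v) (u - v)
    rw [hinner] at hcs
    have hn : ‖u + v‖ ≤ 2 := by
      calc ‖u + v‖ ≤ ‖u‖ + ‖v‖ := norm_add_le _ _
        _ ≤ 2 := by linarith
    have : |a - b| = |‖u‖^2 - ‖v‖^2| := by
      rw [hA, hB, show (1-‖u‖^2) - (1-‖v‖^2) = ‖v‖^2 - ‖u‖^2 by ring, abs_sub_comm]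
    rw [this, dist_eq_norm]
    calc |‖u‖^2 - ‖v‖^2| ≤ ‖u + v‖ * ‖u - v‖ := hcs
      _ ≤ 2 * ‖u - v‖ := by
          exact mul_le_mul_of_nonneg_right hn (norm_nonneg _)
  have hsd : Real.sqrt (m+1) * Real.sqrt δ = 1 := by
    rw [← Real.sqrt_mul (by positivity), hδ]
    rw [show ((m:ℝ)+1) * (1/((m:ℝ)+1)) = 1 by field_simp]
    exact Real.sqrt_one
  have hlb : 2 * Real.sqrt δ ≤ Real.sqrt a + Real.sqrt b := by
    have h1 : Real.sqrt δ ≤ Real.sqrt a := Real.sqrt_le_sqrt ha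
    have h2 : Real.sqrt δ ≤ Real.sqrt b := Real.sqrt_le_sqrt hb
    linarith
  have hδs : 0 < Real.sqrt δ := Real.sqrt_pos.mpr hδpos
  have habs : 0 ≤ |Real.sqrt a - Real.sqrt b| := abs_nonneg _
  have hmain : |Real.sqrt a - Real.sqrt b| * (2 * Real.sqrt δ) ≤ 2 * dist u v := by
    calc |Real.sqrt a - Real.sqrt b| * (2 * Real.sqrt δ)
        ≤ |Real.sqrt a - Real.sqrt b| * (Real.sqrt a + Real.sqrt b) :=
          mul_le_mul_of_nonneg_left hlb habs
      _ = |a - b| := key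
      _ ≤ 2 * dist u v := hab
  have : hfun m u - hfun m v = Real.sqrt a - Real.sqrt b := rfl
  rw [this]
  nlinarith [hmain, hδs, hsd, dist_nonneg (x := u) (y := v), Real.sqrt_nonneg ((m:ℝ)+1)]
end graph

section g2
variable (m : ℕ)
lemma graphMap_lipschitz (ε : ℝ) (hε : ε = 1 ∨ ε = -1) :
    LipschitzOnWith (Real.sqrt (m+2)).toNNReal (graphMap m ε) (capDom m) := by
  rw [lipschitzOnWith_iff_dist_le_mul]
  intro u hu v hv
  have hΔ := hfun_lipschitz m hu hv
  have hε2 : ε^2 = 1 := by rcases hε with h|h <;> simp [h]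
  have hsum : ∀ w₁ w₂ : EuclideanSpace ℝ (Fin m),
      (∑ i : Fin m, dist (w₁ i) (w₂ i) ^ 2) = (dist w₁ w₂)^2 := by
    intro w₁ w₂
    rw [EuclideanSpace.dist_eq, Real.sq_sqrt]
    positivity
  have hd : dist (graphMap m ε u) (graphMap m ε v)
      = Real.sqrt ((dist u v)^2 + (ε * hfun m u - ε * hfun m v)^2) := by
    rw [EuclideanSpace.dist_eq, Fin.sum_univ_castSucc]
    congr 1
    have h1 : ∀ i : Fin m, graphMap m ε u (Fin.castSucc i) = u i := fun i => by
      simp [graphMap]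
    have h2 : ∀ i : Fin m, graphMap m ε v (Fin.castSucc i) = v i := fun i => by
      simp [graphMap]
    have h3 : graphMap m ε u (Fin.last m) = ε * hfun m u := by simp [graphMap]
    have h4 : graphMap m ε v (Fin.last m) = ε * hfun m v := by simp [graphMap]
    rw [h3, h4]
    congr 1
    · rw [← hsum u v]
      exact Finset.sum_congr rfl fun i _ => by rw [h1 i, h2 i]
    · rw [Real.dist_eq, sq_abs]
  rw [hd]
  have hK : ((Real.sqrt (m+2)).toNNReal : ℝ) = Real.sqrt (m+2) :=
    Real.coe_toNNReal _ (Real.sqrt_nonneg _)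
  rw [hK]
  have hΔ2 : (ε * hfun m u - ε * hfun m v)^2 ≤ ((m:ℝ)+1) * (dist u v)^2 := by
    have h0 : (ε * hfun m u - ε * hfun m v)^2 = ε^2 * (hfun m u - hfun m v)^2 := by ring
    rw [h0, hε2, one_mul]
    have h1 : (hfun m u - hfun m v)^2 ≤ (Real.sqrt (m+1) * dist u v)^2 := by
      rw [← sq_abs]
      exact pow_le_pow_left₀ (abs_nonneg _) hΔ 2
    calc (hfun m u - hfun m v)^2 ≤ (Real.sqrt (m+1) * dist u v)^2 := h1
      _ = ((m:ℝ)+1) * (dist u v)^2 := by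
          rw [mul_pow, Real.sq_sqrt (by positivity)]
  calc Real.sqrt ((dist u v)^2 + (ε * hfun m u - ε * hfun m v)^2)
      ≤ Real.sqrt (((m:ℝ)+2) * (dist u v)^2) := by
        apply Real.sqrt_le_sqrt; nlinarith [hΔ2]
    _ = Real.sqrt ((m:ℝ)+2) * dist u v := by
        rw [Real.sqrt_mul (by positivity), Real.sqrt_sq dist_nonneg]
end g2

section g3
variable (m : ℕ)
def capSet (ε : ℝ) : Set (EuclideanSpace ℝ (Fin (m+1))) :=
  {y | y ∈ Metric.sphere (0 : EuclideanSpace ℝ (Fin (m+1))) 1 ∧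
    Real.sqrt (1/(m+1)) ≤ ε * y (Fin.last m)}


lemma eucl_norm_sq (n : ℕ) (y : EuclideanSpace ℝ (Fin n)) : ‖y‖^2 = ∑ i, y i ^ 2 := by
  rw [EuclideanSpace.norm_eq, Real.sq_sqrt (by positivity)]
  exact Finset.sum_congr rfl fun i _ => by rw [Real.norm_eq_abs, sq_abs]

lemma capSet_subset (ε : ℝ) (hε : ε = 1 ∨ ε = -1) :
    capSet m ε ⊆ graphMap m ε '' capDom m := by
  rintro y ⟨hyS, hylast⟩
  rw [mem_sphere_zero_iff_norm] at hyS
  have hε2 : ε^2 = 1 := by rcases hε with h|h <;> simp [h]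
  have hεabs : |ε| = 1 := by rcases hε with h|h <;> simp [h]
  set δ : ℝ := 1/(m+1) with hδ
  have hδnn : (0:ℝ) ≤ δ := by positivity
  set v : EuclideanSpace ℝ (Fin m) := WithLp.toLp 2 (fun i => y (Fin.castSucc i) : Fin m → ℝ) with hv
  have hsumy : ∑ i, y i ^ 2 = 1 := by
    rw [← eucl_norm_sq, hyS, one_pow]
  have hnv : ‖v‖^2 = 1 - y (Fin.last m) ^ 2 := by
    rw [eucl_norm_sq]
    rw [Fin.sum_univ_castSucc] at hsumy
    have : ∑ i : Fin m, v i ^ 2 = ∑ i : Fin m, y (Fin.castSucc i) ^ 2 := rfl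
    rw [this]; linarith
  have hyl2 : δ ≤ y (Fin.last m) ^ 2 := by
    have h1 : Real.sqrt δ ^ 2 ≤ (ε * y (Fin.last m))^2 := by
      apply pow_le_pow_left₀ (Real.sqrt_nonneg _) hylast
    rw [Real.sq_sqrt hδnn] at h1
    calc δ ≤ (ε * y (Fin.last m))^2 := h1
      _ = y (Fin.last m) ^ 2 := by rw [mul_pow, hε2, one_mul]
  have hvdom : v ∈ capDom m := by
    show ‖v‖^2 ≤ 1 - δ
    rw [hnv]; linarith
  refine ⟨v, hvdom, ?_⟩
  ext i
  induction i using Fin.lastCases with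
  | last =>
      have hg : graphMap m ε v (Fin.last m) = ε * hfun m v := by simp [graphMap]
      rw [hg, hfun, hnv]
      have h0 : (0:ℝ) ≤ ε * y (Fin.last m) := le_trans (Real.sqrt_nonneg _) hylast
      have : Real.sqrt (1 - (1 - y (Fin.last m)^2)) = |y (Fin.last m)| := by
        rw [show (1 - (1 - y (Fin.last m)^2)) = y (Fin.last m)^2 by ring, Real.sqrt_sq_eq_abs]
      rw [this]
      have habs : |y (Fin.last m)| = ε * y (Fin.last m) := by
        rw [← abs_of_nonneg h0, abs_mul, hεabs, one_mul]
      rw [habs, ← mul_assoc, ← sq, hε2, one_mul]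
  | cast i =>
      have hg : graphMap m ε v (Fin.castSucc i) = v i := by simp [graphMap]
      rw [hg]

lemma sphere_hausdorff_lt_top' (hm : 1 ≤ m) :
    μH[(m:ℝ)] (Metric.sphere (0 : EuclideanSpace ℝ (Fin (m+1))) 1) < ⊤ := by
  classical
  set σ : Fin (m+1) → (EuclideanSpace ℝ (Fin (m+1)) ≃ₗᵢ[ℝ] EuclideanSpace ℝ (Fin (m+1))) :=
    fun j => LinearIsometryEquiv.piLpCongrLeft 2 ℝ ℝ (Equiv.swap j (Fin.last m)) with hσ
  have hσapp : ∀ j y, (σ j) y (Fin.last m) = y j := by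
    intro j y
    rw [hσ]
    rw [LinearIsometryEquiv.piLpCongrLeft_apply]
    show y ((Equiv.swap j (Fin.last m)).symm (Fin.last m)) = y j
    rw [Equiv.symm_swap, Equiv.swap_apply_right]
  have hcover : Metric.sphere (0 : EuclideanSpace ℝ (Fin (m+1))) 1 ⊆
      ⋃ j : Fin (m+1), ((σ j) ⁻¹' capSet m 1 ∪ (σ j) ⁻¹' capSet m (-1)) := by
    intro y hy
    rw [mem_sphere_zero_iff_norm] at hy
    set δ : ℝ := 1/(m+1) with hδ
    have hex : ∃ j, δ ≤ y j ^ 2 := by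
      by_contra hcon
      push_neg at hcon
      have hlt : ∑ i, y i ^ 2 < ∑ _i : Fin (m+1), δ :=
        Finset.sum_lt_sum_of_nonempty ⟨0, Finset.mem_univ 0⟩ (fun i _ => hcon i)
      rw [Finset.sum_const, Finset.card_univ, Fintype.card_fin, nsmul_eq_mul] at hlt
      rw [← eucl_norm_sq, hy, one_pow] at hlt
      rw [hδ] at hlt
      have : ((m:ℝ)+1) * (1/((m:ℝ)+1)) = 1 := by field_simp
      push_cast at hlt
      rw [this] at hlt
      exact lt_irrefl _ hlt
    obtain ⟨j, hj⟩ := hex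
    have hσS : (σ j) y ∈ Metric.sphere (0 : EuclideanSpace ℝ (Fin (m+1))) 1 := by
      rw [mem_sphere_zero_iff_norm, (σ j).norm_map, hy]
    have habs : Real.sqrt δ ≤ |y j| := by
      rw [← Real.sqrt_sq_eq_abs]
      exact Real.sqrt_le_sqrt hj
    refine Set.mem_iUnion.mpr ⟨j, ?_⟩
    rcases le_or_gt 0 (y j) with h0 | h0
    · left
      refine ⟨hσS, ?_⟩
      rw [hσapp, one_mul]
      rwa [abs_of_nonneg h0] at habs
    · right
      refine ⟨hσS, ?_⟩
      rw [hσapp]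
      rw [abs_of_neg h0] at habs
      linarith
  calc μH[(m:ℝ)] (Metric.sphere (0 : EuclideanSpace ℝ (Fin (m+1))) 1)
      ≤ ∑ j : Fin (m+1), μH[(m:ℝ)] ((σ j) ⁻¹' capSet m 1 ∪ (σ j) ⁻¹' capSet m (-1)) := by
        refine le_trans (measure_mono hcover) ?_
        exact measure_iUnion_fintype_le _ _
    _ < ⊤ := by
        rw [ENNReal.sum_lt_top]
        intro j _
        have hcap : ∀ ε : ℝ, ε = 1 ∨ ε = -1 → μH[(m:ℝ)] (capSet m ε) < ⊤ := by
          intro ε hε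
          calc μH[(m:ℝ)] (capSet m ε) ≤ μH[(m:ℝ)] (graphMap m ε '' capDom m) :=
                measure_mono (capSet_subset m ε hε)
            _ ≤ ((Real.sqrt (m+2)).toNNReal : ENNReal)^((m:ℝ)) * μH[(m:ℝ)] (capDom m) :=
                (graphMap_lipschitz m ε hε).hausdorffMeasure_image_le (by positivity)
            _ < ⊤ := by
                refine ENNReal.mul_lt_top (ENNReal.rpow_lt_top_of_nonneg (by positivity)
                  ENNReal.coe_ne_top) ?_
                exact bounded_hausdorff_lt_top m _ (capDom_bounded m)
        have hpre : ∀ A : Set (EuclideanSpace ℝ (Fin (m+1))),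
            μH[(m:ℝ)] ((σ j) ⁻¹' A) = μH[(m:ℝ)] A := by
          intro A
          exact (σ j).toIsometryEquiv.hausdorffMeasure_preimage (m:ℝ) A
        calc μH[(m:ℝ)] ((σ j) ⁻¹' capSet m 1 ∪ (σ j) ⁻¹' capSet m (-1))
            ≤ μH[(m:ℝ)] ((σ j) ⁻¹' capSet m 1) + μH[(m:ℝ)] ((σ j) ⁻¹' capSet m (-1)) :=
              measure_union_le _ _
          _ < ⊤ := by
              rw [hpre, hpre]
              exact ENNReal.add_lt_top.mpr ⟨hcap 1 (Or.inl rfl), hcap (-1) (Or.inr rfl)⟩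
end g3

section integr
variable (m : ℕ) (hm : 1 ≤ m)

local notation "E" => EuclideanSpace ℝ (Fin (m+1))
local notation "S" => Metric.sphere (0 : EuclideanSpace ℝ (Fin (m+1))) 1

lemma integrableOn_sphere (hm : 1 ≤ m) {g : EuclideanSpace ℝ (Fin (m+1)) → ℝ}
    (hg : Continuous g) : IntegrableOn g S μH[(m:ℝ)] := by
  obtain ⟨C, hC⟩ := (isCompact_sphere (0 : E) 1).exists_bound_of_continuousOn
    hg.continuousOn
  haveI : IsFiniteMeasure (μH[(m:ℝ)].restrict S) := by
    constructor
    rw [Measure.restrict_apply_univ]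
    exact sphere_hausdorff_lt_top' m hm
  refine ⟨hg.aestronglyMeasurable, ?_⟩
  apply MeasureTheory.HasFiniteIntegral.of_bounded (C := C)
  rw [ae_restrict_iff' (Metric.isClosed_sphere).measurableSet]
  exact ae_of_all _ hC

lemma integral_sphere_comp (e : EuclideanSpace ℝ (Fin (m+1)) ≃ₗᵢ[ℝ] EuclideanSpace ℝ (Fin (m+1)))
    (F : EuclideanSpace ℝ (Fin (m+1)) → ℝ) :
    ∫ y in S, F (e y) ∂μH[(m:ℝ)] = ∫ y in S, F y ∂μH[(m:ℝ)] := by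
  have hmp : MeasurePreserving e μH[(m:ℝ)] μH[(m:ℝ)] := by
    have := e.toIsometryEquiv.measurePreserving_hausdorffMeasure (X := E) (Y := E) (m:ℝ)
    exact this
  have hemb : MeasurableEmbedding e := e.toHomeomorph.measurableEmbedding
  have hpre : e ⁻¹' S = S := by
    ext z
    simp [mem_sphere_zero_iff_norm, e.norm_map]
  rw [← hmp.setIntegral_preimage_emb hemb F S, hpre]

lemma sphere_coord_large {y : EuclideanSpace ℝ (Fin (m+1))} (hy : y ∈ S) :
    ∃ j, 1/((m:ℝ)+1) ≤ y j ^ 2 := by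
  rw [mem_sphere_zero_iff_norm] at hy
  by_contra hcon
  push_neg at hcon
  have hlt : ∑ i, y i ^ 2 < ∑ _i : Fin (m+1), 1/((m:ℝ)+1) :=
    Finset.sum_lt_sum_of_nonempty ⟨0, Finset.mem_univ 0⟩ (fun i _ => hcon i)
  rw [Finset.sum_const, Finset.card_univ, Fintype.card_fin, nsmul_eq_mul] at hlt
  have hn : ∑ i, y i ^ 2 = 1 := by
    have : ‖y‖^2 = ∑ i, y i ^ 2 := by
      rw [EuclideanSpace.norm_eq, Real.sq_sqrt (by positivity)]
      exact Finset.sum_congr rfl fun i _ => by rw [Real.norm_eq_abs, sq_abs]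
    rw [← this, hy, one_pow]
  rw [hn] at hlt
  have : ((m:ℝ)+1) * (1/((m:ℝ)+1)) = 1 := by field_simp
  push_cast at hlt
  rw [this] at hlt
  exact lt_irrefl _ hlt

lemma exists_const' (t : ℕ) (ht : 1 ≤ t) (hm : 1 ≤ m) :
    ∃ c : ℝ, 0 < c ∧ ∀ x : EuclideanSpace ℝ (Fin (m+1)),
      ∫ y in S, (⟪x, y⟫)^(2*t) ∂μH[(m:ℝ)] = c * ‖x‖^(2*t) := by
  classical
  set b : Fin (m+1) → EuclideanSpace ℝ (Fin (m+1)) :=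
    fun j => EuclideanSpace.single j (1:ℝ) with hb
  have hbnorm : ∀ j, ‖b j‖ = 1 := by
    intro j; rw [hb]; simp [EuclideanSpace.norm_single]
  set c : ℝ := ∫ y in S, (⟪b 0, y⟫)^(2*t) ∂μH[(m:ℝ)] with hc
  have hunit : ∀ u : EuclideanSpace ℝ (Fin (m+1)), ‖u‖ = 1 →
      (∫ y in S, (⟪u, y⟫)^(2*t) ∂μH[(m:ℝ)]) = c := by
    intro u hu
    have href := Submodule.reflection_sub (by rw [hbnorm 0, hu] :
      ‖(b 0 : EuclideanSpace ℝ (Fin (m+1)))‖ = ‖u‖)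
    set e : EuclideanSpace ℝ (Fin (m+1)) ≃ₗᵢ[ℝ] EuclideanSpace ℝ (Fin (m+1)) :=
      Submodule.reflection (ℝ ∙ ((b 0) - u))ᗮ with he
    have hinner : ∀ y, (⟪u, y⟫ : ℝ) = ⟪b 0, e.symm y⟫ := by
      intro y
      calc (⟪u, y⟫ : ℝ) = ⟪e (b 0), e (e.symm y)⟫ := by rw [href, e.apply_symm_apply]
        _ = ⟪b 0, e.symm y⟫ := e.inner_map_map _ _
    calc (∫ y in S, (⟪u, y⟫)^(2*t) ∂μH[(m:ℝ)])
        = ∫ y in S, (⟪b 0, e.symm y⟫)^(2*t) ∂μH[(m:ℝ)] := by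
          refine setIntegral_congr_fun (Metric.isClosed_sphere).measurableSet ?_
          intro y _
          dsimp only
          rw [hinner]
      _ = c := by
          rw [hc]
          exact integral_sphere_comp m e.symm (fun z => (⟪b 0, z⟫)^(2*t))
  have hscale : ∀ (s : ℝ) (u : EuclideanSpace ℝ (Fin (m+1))),
      (∫ y in S, (⟪s • u, y⟫)^(2*t) ∂μH[(m:ℝ)]) =
        s^(2*t) * ∫ y in S, (⟪u, y⟫)^(2*t) ∂μH[(m:ℝ)] := by
    intro s u
    rw [← integral_const_mul]
    refine setIntegral_congr_fun (Metric.isClosed_sphere).measurableSet ?_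
    intro y _
    dsimp only
    rw [real_inner_smul_left, mul_pow]
  have hmain : ∀ x : EuclideanSpace ℝ (Fin (m+1)),
      ∫ y in S, (⟪x, y⟫)^(2*t) ∂μH[(m:ℝ)] = c * ‖x‖^(2*t) := by
    intro x
    rcases eq_or_ne x 0 with rfl | hx
    · rw [norm_zero, zero_pow (by omega), mul_zero]
      have : ∀ y ∈ S, (⟪(0 : EuclideanSpace ℝ (Fin (m+1))), y⟫ : ℝ)^(2*t) = 0 := by
        intro y _; rw [inner_zero_left, zero_pow (by omega)]
      rw [setIntegral_congr_fun (Metric.isClosed_sphere).measurableSet this,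
        integral_const, smul_zero]
    · have hxu : x = ‖x‖ • (‖x‖⁻¹ • x) := by
        rw [smul_smul, mul_inv_cancel₀ (norm_ne_zero_iff.mpr hx), one_smul]
      have hunorm : ‖(‖x‖⁻¹ • x)‖ = 1 := by
        rw [norm_smul, norm_inv, norm_norm, inv_mul_cancel₀ (norm_ne_zero_iff.mpr hx)]
      conv_lhs => rw [hxu]
      rw [hscale, hunit _ hunorm, mul_comm]
  refine ⟨c, ?_, hmain⟩
  -- positivity of c
  have hV : 0 < (μH[(m:ℝ)] (S : Set (EuclideanSpace ℝ (Fin (m+1))))).toReal :=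
    ENNReal.toReal_pos (sphere_hausdorff_pos m hm).ne' (sphere_hausdorff_lt_top' m hm).ne
  have hint : ∀ j, IntegrableOn (fun y : EuclideanSpace ℝ (Fin (m+1)) =>
      (⟪b j, y⟫ : ℝ)^(2*t)) S μH[(m:ℝ)] := by
    intro j
    apply integrableOn_sphere m hm
    exact ((innerSL ℝ (b j)).continuous).pow _
  have hsum : ∑ j, (∫ y in S, (⟪b j, y⟫ : ℝ)^(2*t) ∂μH[(m:ℝ)])
      = ∫ y in S, (∑ j, (⟪b j, y⟫ : ℝ)^(2*t)) ∂μH[(m:ℝ)] :=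
    (integral_finset_sum _ (fun j _ => hint j)).symm
  have hsc : ∀ j, (∫ y in S, (⟪b j, y⟫ : ℝ)^(2*t) ∂μH[(m:ℝ)]) = c :=
    fun j => hunit _ (hbnorm j)
  have hlower : ∀ y ∈ S, (1/((m:ℝ)+1))^t ≤ ∑ j, (⟪b j, y⟫ : ℝ)^(2*t) := by
    intro y hy
    obtain ⟨j, hj⟩ := sphere_coord_large m hy
    have hbj : ∀ z : EuclideanSpace ℝ (Fin (m+1)), (⟪b j, z⟫ : ℝ) = z j := by
      intro z
      rw [hb]
      simp [EuclideanSpace.inner_single_left]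
    calc (1/((m:ℝ)+1))^t ≤ (y j ^ 2)^t := by
          apply pow_le_pow_left₀ (by positivity) hj
      _ = (⟪b j, y⟫ : ℝ)^(2*t) := by rw [hbj, ← pow_mul]
      _ ≤ ∑ j', (⟪b j', y⟫ : ℝ)^(2*t) := by
          refine Finset.single_le_sum (f := fun j' => (⟪b j', y⟫ : ℝ)^(2*t)) (fun j' _ => ?_) (Finset.mem_univ j)
          rw [pow_mul]; positivity
  have hconst : ∫ (_ : EuclideanSpace ℝ (Fin (m+1))) in S, (1/((m:ℝ)+1))^t ∂μH[(m:ℝ)]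
      = (μH[(m:ℝ)] (S : Set (EuclideanSpace ℝ (Fin (m+1))))).toReal * (1/((m:ℝ)+1))^t := by
    rw [setIntegral_const, smul_eq_mul, measureReal_def]
  have hmono : ∫ (_ : EuclideanSpace ℝ (Fin (m+1))) in S, (1/((m:ℝ)+1))^t ∂μH[(m:ℝ)]
      ≤ ∫ y in S, (∑ j, (⟪b j, y⟫ : ℝ)^(2*t)) ∂μH[(m:ℝ)] := by
    refine setIntegral_mono_on ?_ ?_ (Metric.isClosed_sphere).measurableSet hlower
    · exact integrableOn_sphere m hm continuous_const
    · exact integrable_finset_sum _ fun j _ => hint j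
  have hineq : (μH[(m:ℝ)] (S : Set (EuclideanSpace ℝ (Fin (m+1))))).toReal * (1/((m:ℝ)+1))^t
      ≤ ((m:ℕ)+1) * c := by
    rw [← hconst]
    calc _ ≤ ∫ y in S, (∑ j, (⟪b j, y⟫ : ℝ)^(2*t)) ∂μH[(m:ℝ)] := hmono
      _ = ∑ j, (∫ y in S, (⟪b j, y⟫ : ℝ)^(2*t) ∂μH[(m:ℝ)]) := hsum.symm
      _ = ∑ _j : Fin (m+1), c := Finset.sum_congr rfl fun j _ => hsc j
      _ = ((m:ℕ)+1) * c := by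
          rw [Finset.sum_const, Finset.card_univ, Fintype.card_fin, nsmul_eq_mul]
          push_cast; ring
  have hpos : 0 < (μH[(m:ℝ)] (S : Set (EuclideanSpace ℝ (Fin (m+1))))).toReal * (1/((m:ℝ)+1))^t := by
    apply mul_pos hV
    positivity
  nlinarith [hineq, hpos, Nat.cast_nonneg (α := ℝ) m]
end integr

section main
variable (m : ℕ)

lemma heval (n : ℕ) (w z : EuclideanSpace ℝ (Fin (m+1))) :
    MvPolynomial.eval (fun j => z j)
      ((∑ j, MvPolynomial.C (w j) * MvPolynomial.X j) ^ n) = (⟪w, z⟫ : ℝ)^n := by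
  rw [map_pow, map_sum]
  congr 1
  rw [PiLp.inner_apply]
  refine Finset.sum_congr rfl fun j _ => ?_
  simp [RCLike.inner_apply]
  ring

lemma hhom (n : ℕ) (w : EuclideanSpace ℝ (Fin (m+1))) :
    MvPolynomial.IsHomogeneous
      ((∑ j, MvPolynomial.C (w j) * MvPolynomial.X j) ^ n) n := by
  have h1 : MvPolynomial.IsHomogeneous
      (∑ j, MvPolynomial.C (w j) * MvPolynomial.X j : MvPolynomial (Fin (m+1)) ℝ) 1 :=
    MvPolynomial.IsHomogeneous.sum _ _ _ fun j _ => MvPolynomial.isHomogeneous_C_mul_X _ _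
  simpa only [one_mul] using h1.pow n

lemma poly_continuous (d : ℕ) (f : MvPolynomial (Fin d) ℝ) :
    Continuous (fun y : EuclideanSpace ℝ (Fin d) => MvPolynomial.eval (fun j => y j) f) := by
  exact (MvPolynomial.continuous_eval _).comp
    (continuous_pi fun j => (EuclideanSpace.proj (𝕜 := ℝ) j).continuous)

/-- Lyubich–Vaserstein: a positive cubature rule of index `2t` on `S^{d-1}` with `N` nodes
exists iff `⟨x,x⟩^t` is a sum of `N` powers `⟨x,r_i⟩^{2t}` of linear forms. -/
theorem cubature_index_iff_isometric_embedding
    (d t N : ℕ) (hd : 2 ≤ d) (ht : 1 ≤ t) (hN : 1 ≤ N) :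
    (∃ (x : Fin N → EuclideanSpace ℝ (Fin d)) (lam : Fin N → ℝ),
      (∀ i, x i ∈ Metric.sphere (0 : EuclideanSpace ℝ (Fin d)) 1) ∧
      (∀ i, 0 ≤ lam i) ∧
      (∀ f : MvPolynomial (Fin d) ℝ, f.IsHomogeneous (2 * t) →
        (μH[(d : ℝ) - 1] (Metric.sphere (0 : EuclideanSpace ℝ (Fin d)) 1)).toReal⁻¹ *
            ∫ y in Metric.sphere (0 : EuclideanSpace ℝ (Fin d)) 1,
              MvPolynomial.eval (fun j => y j) f ∂μH[(d : ℝ) - 1]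
          = ∑ i, lam i * MvPolynomial.eval (fun j => x i j) f))
    ↔
    (∃ r : Fin N → EuclideanSpace ℝ (Fin d),
      ∀ x : EuclideanSpace ℝ (Fin d), ∑ i, ⟪x, r i⟫ ^ (2 * t) = ⟪x, x⟫ ^ t) := by
  classical
  obtain ⟨m, rfl⟩ : ∃ m, d = m + 1 := ⟨d - 1, by omega⟩
  have hm : 1 ≤ m := by omega
  have hcast : ((m+1:ℕ):ℝ) - 1 = (m:ℝ) := by push_cast; ring
  rw [hcast]
  set S : Set (EuclideanSpace ℝ (Fin (m+1))) :=
    Metric.sphere (0 : EuclideanSpace ℝ (Fin (m+1))) 1 with hS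
  set V : ℝ := (μH[(m:ℝ)] S).toReal with hVdef
  have hV : 0 < V :=
    ENNReal.toReal_pos (sphere_hausdorff_pos m hm).ne' (sphere_hausdorff_lt_top' m hm).ne
  obtain ⟨c, hc, hI⟩ := exists_const' m t ht hm
  have h2t : (2 * t : ℕ) ≠ 0 := by omega
  have hinner_self : ∀ w : EuclideanSpace ℝ (Fin (m+1)),
      (⟪w, w⟫ : ℝ) ^ t = ‖w‖ ^ (2*t) := by
    intro w
    rw [real_inner_self_eq_norm_sq, ← pow_mul]
  constructor
  · rintro ⟨x, lam, hxS, hlam, hcub⟩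
    have key : ∀ w : EuclideanSpace ℝ (Fin (m+1)),
        ∑ i, lam i * (⟪w, x i⟫:ℝ)^(2*t) = V⁻¹ * (c * ‖w‖^(2*t)) := by
      intro w
      have h := hcub ((∑ j, MvPolynomial.C (w j) * MvPolynomial.X j) ^ (2*t)) (hhom m (2*t) w)
      simp only [heval] at h
      rw [hI w] at h
      rw [← h]
    set a : ℝ := V⁻¹ * c with ha
    have hapos : 0 < a := by positivity
    refine ⟨fun i => ((lam i / a) ^ ((1:ℝ)/(2*t))) • x i, fun w => ?_⟩
    have hpow : ∀ i, (((lam i / a) ^ ((1:ℝ)/(2*t)))^(2*t) : ℝ) = lam i / a := by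
      intro i
      have hb : (0:ℝ) ≤ lam i / a := div_nonneg (hlam i) hapos.le
      rw [← Real.rpow_natCast ((lam i / a) ^ ((1:ℝ)/(2*t))) (2*t),
        ← Real.rpow_mul hb]
      rw [show (1:ℝ)/(2*(t:ℝ)) * ((2*t : ℕ):ℝ) = 1 by
        push_cast
        field_simp]
      exact Real.rpow_one _
    calc ∑ i, (⟪w, ((lam i / a) ^ ((1:ℝ)/(2*t))) • x i⟫:ℝ) ^ (2*t)
        = ∑ i, (lam i / a) * (⟪w, x i⟫:ℝ)^(2*t) := by
          refine Finset.sum_congr rfl fun i _ => ?_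
          rw [real_inner_smul_right, mul_pow, hpow i]
      _ = a⁻¹ * ∑ i, lam i * (⟪w, x i⟫:ℝ)^(2*t) := by
          rw [Finset.mul_sum]
          exact Finset.sum_congr rfl fun i _ => by ring
      _ = a⁻¹ * (a * ‖w‖^(2*t)) := by rw [key w, ha, mul_assoc]
      _ = (⟪w, w⟫:ℝ) ^ t := by
          rw [hinner_self w, ← mul_assoc, inv_mul_cancel₀ hapos.ne', one_mul]
  · rintro ⟨r, hr⟩
    set e0 : EuclideanSpace ℝ (Fin (m+1)) := EuclideanSpace.single 0 1 with he0
    have he0n : ‖e0‖ = 1 := by rw [he0, EuclideanSpace.norm_single, norm_one]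
    set x : Fin N → EuclideanSpace ℝ (Fin (m+1)) :=
      fun i => if r i = 0 then e0 else ‖r i‖⁻¹ • r i with hx
    set lam : Fin N → ℝ := fun i => (V⁻¹ * c) * ‖r i‖^(2*t) with hlamdef
    have hxS : ∀ i, x i ∈ S := by
      intro i
      rw [hS, mem_sphere_zero_iff_norm, hx]
      dsimp only
      split_ifs with h
      · exact he0n
      · rw [norm_smul, norm_inv, norm_norm, inv_mul_cancel₀ (norm_ne_zero_iff.mpr h)]
    have hlam : ∀ i, 0 ≤ lam i := by
      intro i
      rw [hlamdef]
      dsimp only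
      positivity
    have key : ∀ w : EuclideanSpace ℝ (Fin (m+1)),
        ∑ i, lam i * (⟪w, x i⟫:ℝ)^(2*t) = V⁻¹ * (c * ‖w‖^(2*t)) := by
      intro w
      have hper : ∀ i, lam i * (⟪w, x i⟫:ℝ)^(2*t) = (V⁻¹ * c) * (⟪w, r i⟫:ℝ)^(2*t) := by
        intro i
        rw [hlamdef, hx]
        dsimp only
        split_ifs with h
        · rw [h, inner_zero_right, zero_pow h2t, norm_zero, zero_pow h2t]
          ring
        · rw [real_inner_smul_right, mul_pow, inv_pow]
          have hne : ‖r i‖ ^ (2*t) ≠ 0 := pow_ne_zero _ (norm_ne_zero_iff.mpr h)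
          field_simp
      calc ∑ i, lam i * (⟪w, x i⟫:ℝ)^(2*t)
          = ∑ i, (V⁻¹ * c) * (⟪w, r i⟫:ℝ)^(2*t) := Finset.sum_congr rfl fun i _ => hper i
        _ = (V⁻¹ * c) * ∑ i, (⟪w, r i⟫:ℝ)^(2*t) := by rw [← Finset.mul_sum]
        _ = V⁻¹ * (c * ‖w‖^(2*t)) := by rw [hr w, hinner_self w, mul_assoc]
    refine ⟨x, lam, hxS, hlam, ?_⟩
    intro f hf
    have hint : ∀ g : MvPolynomial (Fin (m+1)) ℝ,
        IntegrableOn (fun y : EuclideanSpace ℝ (Fin (m+1)) =>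
          MvPolynomial.eval (fun j => y j) g) S μH[(m:ℝ)] :=
      fun g => integrableOn_sphere m hm (poly_continuous (m+1) g)
    set L : MvPolynomial (Fin (m+1)) ℝ →ₗ[ℝ] ℝ :=
      { toFun := fun g => V⁻¹ * (∫ y in S, MvPolynomial.eval (fun j => y j) g ∂μH[(m:ℝ)])
          - ∑ i, lam i * MvPolynomial.eval (fun j => x i j) g
        map_add' := by
          intro g₁ g₂
          simp only [map_add, mul_add]
          rw [integral_add (hint g₁) (hint g₂), Finset.sum_add_distrib]
          ring
        map_smul' := by
          intro s g
          simp only [MvPolynomial.smul_eq_C_mul, map_mul, MvPolynomial.eval_C,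
            RingHom.id_apply, smul_eq_mul]
          rw [integral_const_mul]
          have hsum : ∑ i, lam i * (s * MvPolynomial.eval (fun j => x i j) g)
              = s * ∑ i, lam i * MvPolynomial.eval (fun j => x i j) g := by
            rw [Finset.mul_sum]
            exact Finset.sum_congr rfl fun i _ => by ring
          rw [hsum]
          ring } with hL
    have hL0 : ∀ w : Fin (m+1) → ℝ,
        L ((∑ j, MvPolynomial.C (w j) * MvPolynomial.X j) ^ (2*t)) = 0 := by
      intro w
      set w' : EuclideanSpace ℝ (Fin (m+1)) := WithLp.toLp 2 (w : Fin (m+1) → ℝ) with hw'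
      show V⁻¹ * (∫ y in S, MvPolynomial.eval (fun j => y j)
          ((∑ j, MvPolynomial.C (w' j) * MvPolynomial.X j) ^ (2*t)) ∂μH[(m:ℝ)])
          - ∑ i, lam i * MvPolynomial.eval (fun j => x i j)
            ((∑ j, MvPolynomial.C (w' j) * MvPolynomial.X j) ^ (2*t)) = 0
      simp only [heval]
      rw [hI w', key w']
      ring
    have := span_lemma (m+1) (2*t) L hL0 hf
    have hLf : V⁻¹ * (∫ y in S, MvPolynomial.eval (fun j => y j) f ∂μH[(m:ℝ)])
        - ∑ i, lam i * MvPolynomial.eval (fun j => x i j) f = 0 := this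
    linarith [hLf]
end main
end

section
/- Let d ≥ 1 and γ > −1, and in d+1 real variables set Y = S_{(8)} + a·S_{(6,2)} + b·S_{(4,4)}, where a = −4(γ+4)/(d(γ+1)) and b = 6(γ+3)(γ+4)/(d(γ+1)(γ+2)) and S_ℓ are monomial symmetric polynomials. Then for every x ∈ ℝ^{d+1} with all coordinates nonzero, Σ_{i=1}^{d+1} ∂²Y/∂x_i²(x) + (2γ+1) Σ_{i=1}^{d+1} (1/x_i) ∂Y/∂x_i(x) = 0. -/
open MeasureTheory Finset

/-- `Y = S_{(8)} + a S_{(6,2)} + b S_{(4,4)}` in `d+1` real variables. -/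
noncomputable def Ypoly (d : ℕ) (a b : ℝ) (x : Fin (d + 1) → ℝ) : ℝ :=
  (∑ i, x i ^ 8)
    + a * ∑ i, ∑ j ∈ Finset.univ.filter (fun j => j ≠ i), x i ^ 6 * x j ^ 2
    + b * ∑ i, ∑ j ∈ Finset.univ.filter (fun j => i < j), x i ^ 4 * x j ^ 4

private lemma sum_split_i {α : Type*} [DecidableEq α] (S : Finset α) (i : α) (f : α → ℝ) :
    ∑ j ∈ S, f j = (if i ∈ S then f i else 0) + ∑ j ∈ S.erase i, f j := by
  by_cases h : i ∈ S
  · rw [if_pos h, Finset.add_sum_erase _ _ h]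
  · rw [if_neg h, Finset.erase_eq_of_notMem h, zero_add]

private lemma Ypoly_update_eq (d : ℕ) (a b : ℝ) (x : Fin (d + 1) → ℝ) (i : Fin (d + 1))
    (t : ℝ) : Ypoly d a b (Function.update x i t) =
      t ^ 8 + (a * ∑ j ∈ univ.erase i, x j ^ 2) * t ^ 6
        + (b * ∑ j ∈ univ.erase i, x j ^ 4) * t ^ 4
        + (a * ∑ j ∈ univ.erase i, x j ^ 6) * t ^ 2
        + ((∑ j ∈ univ.erase i, x j ^ 8)
            + a * (∑ k ∈ univ.erase i, ∑ j ∈ (univ.erase k).erase i, x k ^ 6 * x j ^ 2)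
            + b * (∑ k ∈ univ.erase i,
                ∑ j ∈ (univ.filter (fun j => k < j)).erase i, x k ^ 4 * x j ^ 4)) := by
  set u := Function.update x i t with hu
  have hui : u i = t := Function.update_self i t x
  have hun : ∀ j, j ≠ i → u j = x j := fun j hj => Function.update_of_ne hj t x
  have hS1 : ∑ j, u j ^ 8 = t ^ 8 + ∑ j ∈ univ.erase i, x j ^ 8 := by
    rw [← Finset.add_sum_erase _ _ (mem_univ i), hui]
    congr 1
    exact Finset.sum_congr rfl fun j hj => by rw [hun j (Finset.mem_erase.mp hj).1]
  have hS2 : ∑ k, ∑ j ∈ univ.filter (fun j => j ≠ k), u k ^ 6 * u j ^ 2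
      = (∑ j ∈ univ.erase i, x j ^ 2) * t ^ 6 + (∑ k ∈ univ.erase i, x k ^ 6) * t ^ 2
        + ∑ k ∈ univ.erase i, ∑ j ∈ (univ.erase k).erase i, x k ^ 6 * x j ^ 2 := by
    have hf : ∀ k : Fin (d + 1), univ.filter (fun j => j ≠ k) = univ.erase k := fun k =>
      Finset.filter_ne' univ k
    simp only [hf]
    rw [← Finset.add_sum_erase _ _ (mem_univ i)]
    have h1 : ∑ j ∈ univ.erase i, u i ^ 6 * u j ^ 2 = (∑ j ∈ univ.erase i, x j ^ 2) * t ^ 6 := by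
      rw [Finset.sum_mul]
      exact Finset.sum_congr rfl fun j hj => by
        rw [hui, hun j (Finset.mem_erase.mp hj).1]; ring
    have h2 : ∀ k ∈ univ.erase i, ∑ j ∈ univ.erase k, u k ^ 6 * u j ^ 2
        = x k ^ 6 * t ^ 2 + ∑ j ∈ (univ.erase k).erase i, x k ^ 6 * x j ^ 2 := by
      intro k hk
      have hki : k ≠ i := (Finset.mem_erase.mp hk).1
      have hik : i ∈ univ.erase k := Finset.mem_erase.mpr ⟨Ne.symm hki, mem_univ i⟩
      rw [← Finset.add_sum_erase _ _ hik, hui, hun k hki]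
      congr 1
      exact Finset.sum_congr rfl fun j hj => by
        rw [hun j (Finset.mem_erase.mp hj).1]
    rw [Finset.sum_congr rfl h2, Finset.sum_add_distrib, h1, ← Finset.sum_mul]
    ring
  have hS3 : ∑ k, ∑ j ∈ univ.filter (fun j => k < j), u k ^ 4 * u j ^ 4
      = (∑ j ∈ univ.erase i, x j ^ 4) * t ^ 4
        + ∑ k ∈ univ.erase i, ∑ j ∈ (univ.filter (fun j => k < j)).erase i,
            x k ^ 4 * x j ^ 4 := by
    rw [← Finset.add_sum_erase _ _ (mem_univ i)]
    have h1 : ∑ j ∈ univ.filter (fun j => i < j), u i ^ 4 * u j ^ 4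
        = (∑ j ∈ univ.filter (fun j => i < j), x j ^ 4) * t ^ 4 := by
      rw [Finset.sum_mul]
      exact Finset.sum_congr rfl fun j hj => by
        rw [hui, hun j (ne_of_gt (Finset.mem_filter.mp hj).2)]; ring
    have h2 : ∀ k ∈ univ.erase i, ∑ j ∈ univ.filter (fun j => k < j), u k ^ 4 * u j ^ 4
        = (if k < i then x k ^ 4 * t ^ 4 else 0)
          + ∑ j ∈ (univ.filter (fun j => k < j)).erase i, x k ^ 4 * x j ^ 4 := by
      intro k hk
      have hki : k ≠ i := (Finset.mem_erase.mp hk).1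
      rw [sum_split_i (univ.filter (fun j => k < j)) i (fun j => u k ^ 4 * u j ^ 4)]
      congr 1
      · by_cases h : k < i
        · rw [if_pos (Finset.mem_filter.mpr ⟨mem_univ i, h⟩), if_pos h, hui, hun k hki]
        · rw [if_neg (by simp [h]), if_neg h]
      · exact Finset.sum_congr rfl fun j hj => by
          rw [hun k hki, hun j (Finset.mem_erase.mp hj).1]
    rw [h1, Finset.sum_congr rfl h2, Finset.sum_add_distrib]
    have h3 : ∑ k ∈ univ.erase i, (if k < i then x k ^ 4 * t ^ 4 else 0)
        = (∑ k ∈ (univ.erase i).filter (fun k => k < i), x k ^ 4) * t ^ 4 := by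
      rw [← Finset.sum_filter, Finset.sum_mul]
    have h4 : (∑ j ∈ univ.filter (fun j => i < j), x j ^ 4)
        + ∑ k ∈ (univ.erase i).filter (fun k => k < i), x k ^ 4
        = ∑ j ∈ univ.erase i, x j ^ 4 := by
      rw [← Finset.sum_filter_add_sum_filter_not (univ.erase i) (fun j => j < i)]
      have e1 : univ.filter (fun j => i < j) = (univ.erase i).filter (fun j => ¬ j < i) := by
        ext j
        simp only [Finset.mem_filter, Finset.mem_erase, mem_univ, true_and, and_true, not_lt]
        constructor
        · intro h; exact ⟨ne_of_gt h, le_of_lt h⟩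
        · intro ⟨h1, h2⟩; exact lt_of_le_of_ne h2 (Ne.symm h1)
      rw [e1]; ring
    rw [h3, ← h4]
    ring
  show (∑ j, u j ^ 8)
      + a * (∑ k, ∑ j ∈ univ.filter (fun j => j ≠ k), u k ^ 6 * u j ^ 2)
      + b * (∑ k, ∑ j ∈ univ.filter (fun j => k < j), u k ^ 4 * u j ^ 4) = _
  rw [hS1, hS2, hS3]
  ring

private lemma hasDerivAt_Y (p q r s t : ℝ) :
    HasDerivAt (fun t : ℝ => t ^ 8 + p * t ^ 6 + q * t ^ 4 + r * t ^ 2 + s)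
      (8 * t ^ 7 + 6 * p * t ^ 5 + 4 * q * t ^ 3 + 2 * r * t) t := by
  have h := ((((hasDerivAt_pow 8 t).add ((hasDerivAt_pow 6 t).const_mul p)).add
      ((hasDerivAt_pow 4 t).const_mul q)).add
      ((hasDerivAt_pow 2 t).const_mul r)).add (hasDerivAt_const t s)
  refine h.congr_deriv ?_
  push_cast
  ring

private lemma hasDerivAt_Y' (p q r t : ℝ) :
    HasDerivAt (fun t : ℝ => 8 * t ^ 7 + 6 * p * t ^ 5 + 4 * q * t ^ 3 + 2 * r * t)
      (56 * t ^ 6 + 30 * p * t ^ 4 + 12 * q * t ^ 2 + 2 * r) t := by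
  have h := ((((hasDerivAt_pow 7 t).const_mul 8).add
      ((hasDerivAt_pow 5 t).const_mul (6 * p))).add
      ((hasDerivAt_pow 3 t).const_mul (4 * q))).add ((hasDerivAt_id t).const_mul (2 * r))
  refine h.congr_deriv ?_
  push_cast
  ring

private lemma deriv_Y (p q r s : ℝ) :
    deriv (fun t : ℝ => t ^ 8 + p * t ^ 6 + q * t ^ 4 + r * t ^ 2 + s)
      = fun t => 8 * t ^ 7 + 6 * p * t ^ 5 + 4 * q * t ^ 3 + 2 * r * t := by
  funext t
  exact (hasDerivAt_Y p q r s t).deriv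

private lemma iteratedDeriv_two_Y (p q r s t : ℝ) :
    iteratedDeriv 2 (fun t : ℝ => t ^ 8 + p * t ^ 6 + q * t ^ 4 + r * t ^ 2 + s) t
      = 56 * t ^ 6 + 30 * p * t ^ 4 + 12 * q * t ^ 2 + 2 * r := by
  rw [iteratedDeriv_succ, iteratedDeriv_one, deriv_Y]
  exact (hasDerivAt_Y' p q r t).deriv

/-- For the stated values of `a` and `b`, `Y` satisfies the Dunkl Laplacian equation
`∑ ∂²Y/∂x_i² + (2γ+1) ∑ (1/x_i) ∂Y/∂x_i = 0` at every point with nonzero coordinates. -/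
theorem dunkl_laplacian_Y_eq_zero
    (d : ℕ) (hd : 1 ≤ d) (γ : ℝ) (hγ : -1 < γ) (a b : ℝ)
    (ha : a = -(4 * (γ + 4)) / (d * (γ + 1)))
    (hb : b = 6 * (γ + 3) * (γ + 4) / (d * (γ + 1) * (γ + 2)))
    (x : Fin (d + 1) → ℝ) (hx : ∀ i, x i ≠ 0) :
    (∑ i, iteratedDeriv 2 (fun t => Ypoly d a b (Function.update x i t)) (x i))
      + (2 * γ + 1) *
          ∑ i, (x i)⁻¹ * deriv (fun t => Ypoly d a b (Function.update x i t)) (x i) = 0 := by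
  have hfun : ∀ i : Fin (d + 1), (fun t => Ypoly d a b (Function.update x i t))
      = fun t => t ^ 8 + (a * ∑ j ∈ univ.erase i, x j ^ 2) * t ^ 6
        + (b * ∑ j ∈ univ.erase i, x j ^ 4) * t ^ 4
        + (a * ∑ j ∈ univ.erase i, x j ^ 6) * t ^ 2
        + ((∑ j ∈ univ.erase i, x j ^ 8)
            + a * (∑ k ∈ univ.erase i, ∑ j ∈ (univ.erase k).erase i, x k ^ 6 * x j ^ 2)
            + b * (∑ k ∈ univ.erase i,
                ∑ j ∈ (univ.filter (fun j => k < j)).erase i, x k ^ 4 * x j ^ 4)) :=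
    fun i => funext fun t => Ypoly_update_eq d a b x i t
  have h2 : ∀ i : Fin (d + 1),
      iteratedDeriv 2 (fun t => Ypoly d a b (Function.update x i t)) (x i)
      = 56 * (x i) ^ 6 + 30 * (a * ∑ j ∈ univ.erase i, x j ^ 2) * (x i) ^ 4
        + 12 * (b * ∑ j ∈ univ.erase i, x j ^ 4) * (x i) ^ 2
        + 2 * (a * ∑ j ∈ univ.erase i, x j ^ 6) := by
    intro i
    rw [hfun i, iteratedDeriv_two_Y]
  have h1 : ∀ i : Fin (d + 1),
      (x i)⁻¹ * deriv (fun t => Ypoly d a b (Function.update x i t)) (x i)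
      = 8 * (x i) ^ 6 + 6 * (a * ∑ j ∈ univ.erase i, x j ^ 2) * (x i) ^ 4
        + 4 * (b * ∑ j ∈ univ.erase i, x j ^ 4) * (x i) ^ 2
        + 2 * (a * ∑ j ∈ univ.erase i, x j ^ 6) := by
    intro i
    rw [hfun i, deriv_Y]
    field_simp [hx i]
  rw [Finset.sum_congr rfl fun i _ => h2 i, Finset.sum_congr rfl fun i _ => h1 i,
    Finset.mul_sum, ← Finset.sum_add_distrib]
  set p2 : ℝ := ∑ j, x j ^ 2 with hp2
  set p4 : ℝ := ∑ j, x j ^ 4 with hp4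
  set p6 : ℝ := ∑ j, x j ^ 6 with hp6
  have hAe : ∀ i : Fin (d + 1), ∑ j ∈ univ.erase i, x j ^ 2 = p2 - x i ^ 2 := fun i =>
    Finset.sum_erase_eq_sub (mem_univ i)
  have hCe : ∀ i : Fin (d + 1), ∑ j ∈ univ.erase i, x j ^ 4 = p4 - x i ^ 4 := fun i =>
    Finset.sum_erase_eq_sub (mem_univ i)
  have hBe : ∀ i : Fin (d + 1), ∑ j ∈ univ.erase i, x j ^ 6 = p6 - x i ^ 6 := fun i =>
    Finset.sum_erase_eq_sub (mem_univ i)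
  have hexp : ∀ i : Fin (d + 1),
      (56 * (x i) ^ 6 + 30 * (a * ∑ j ∈ univ.erase i, x j ^ 2) * (x i) ^ 4
        + 12 * (b * ∑ j ∈ univ.erase i, x j ^ 4) * (x i) ^ 2
        + 2 * (a * ∑ j ∈ univ.erase i, x j ^ 6))
      + (2 * γ + 1) * (8 * (x i) ^ 6 + 6 * (a * ∑ j ∈ univ.erase i, x j ^ 2) * (x i) ^ 4
        + 4 * (b * ∑ j ∈ univ.erase i, x j ^ 4) * (x i) ^ 2
        + 2 * (a * ∑ j ∈ univ.erase i, x j ^ 6))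
      = (16 * (γ + 4)) * x i ^ 6
        + (12 * a * (γ + 3)) * (p2 * x i ^ 4 - x i ^ 6)
        + (8 * b * (γ + 2)) * (p4 * x i ^ 2 - x i ^ 6)
        + (4 * a * (γ + 1)) * (p6 - x i ^ 6) := by
    intro i
    rw [hAe i, hCe i, hBe i]
    ring
  rw [Finset.sum_congr rfl fun i _ => hexp i]
  rw [Finset.sum_add_distrib, Finset.sum_add_distrib, Finset.sum_add_distrib,
    ← Finset.mul_sum, ← Finset.mul_sum, ← Finset.mul_sum, ← Finset.mul_sum]
  have e1 : ∑ i : Fin (d + 1), (p2 * x i ^ 4 - x i ^ 6) = p2 * p4 - p6 := by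
    rw [Finset.sum_sub_distrib, ← Finset.mul_sum, ← hp4, ← hp6]
  have e2 : ∑ i : Fin (d + 1), (p4 * x i ^ 2 - x i ^ 6) = p4 * p2 - p6 := by
    rw [Finset.sum_sub_distrib, ← Finset.mul_sum, ← hp2, ← hp6]
  have e3 : ∑ i : Fin (d + 1), (p6 - x i ^ 6) = ((d : ℝ) + 1) * p6 - p6 := by
    rw [Finset.sum_sub_distrib, ← hp6, Finset.sum_const, Finset.card_univ, Fintype.card_fin]
    ring
  have e0 : ∑ i : Fin (d + 1), x i ^ 6 = p6 := rfl
  rw [e0, e1, e2, e3]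
  have hd0 : (d : ℝ) ≠ 0 := Nat.cast_ne_zero.mpr (by omega)
  have hγ1 : γ + 1 ≠ 0 := by linarith
  have hγ2 : γ + 2 ≠ 0 := by linarith
  have key1 : 12 * a * (γ + 3) + 8 * b * (γ + 2) = 0 := by
    rw [ha, hb]; field_simp; ring
  have key2 : 16 * (γ + 4) + 4 * a * (γ + 1) * (d : ℝ) = 0 := by
    rw [ha]; field_simp; ring
  linear_combination (p2 * p4 - p6) * key1 + p6 * key2
end

section
/- Let d ≥ 1, γ > −1, and in d+1 variables set P_4 = S_{(4)} + a·S_{(3,1)} + b·S_{(2,2)} with a = −4(γ+4)/(d(γ+1)) and b = 6(γ+3)(γ+4)/(d(γ+1)(γ+2)). Then for every 1 ≤ k ≤ d+1, evaluating at the vector v_k with k ones followed by zeros gives P_4(v_k) = k·( d(γ+1)(γ+2) + (1−γ)(γ+4)(k−1) ) / ( d(γ+1)(γ+2) ), and this value is strictly positive. -/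
open MeasureTheory Finset

/-- `P_4 = S_{(4)} + a S_{(3,1)} + b S_{(2,2)}` in `d+1` real variables. -/
noncomputable def P4eval (d : ℕ) (a b : ℝ) (x : Fin (d + 1) → ℝ) : ℝ :=
  (∑ i, x i ^ 4)
    + a * ∑ i, ∑ j ∈ Finset.univ.filter (fun j => j ≠ i), x i ^ 3 * x j
    + b * ∑ i, ∑ j ∈ Finset.univ.filter (fun j => i < j), x i ^ 2 * x j ^ 2

/-- `v_k = (1,…,1,0,…,0)` with `k` ones, in `d+1` coordinates. -/
def vk (d k : ℕ) : Fin (d + 1) → ℝ :=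
  fun i => if (i : ℕ) < k then 1 else 0

lemma sum_vk (d k : ℕ) (hkd : k ≤ d + 1) :
    ∑ i : Fin (d+1), vk d k i = k := by
  show ∑ i : Fin (d+1), (if (i:ℕ) < k then (1:ℝ) else 0) = k
  rw [Fin.sum_univ_eq_sum_range (fun i => if i < k then (1:ℝ) else 0)]
  rw [← Finset.sum_subset (Finset.range_subset_range.mpr hkd)
      (fun x _ hx => by rw [if_neg]; simpa using hx)]
  simp [Finset.mem_range]
  rw [Finset.filter_true_of_mem fun x hx => Finset.mem_range.mp hx, Finset.card_range]

lemma split_ne {n : ℕ} (g : Fin n → ℝ) (i : Fin n) :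
    ∑ j ∈ Finset.univ.filter (fun j => j ≠ i), g j = ∑ j, g j - g i := by
  rw [Finset.filter_ne', Finset.sum_erase_eq_sub (Finset.mem_univ i)]

lemma lt_split {n : ℕ} (g : Fin n → ℝ) (i : Fin n) :
    ∑ j ∈ Finset.univ.filter (fun j => j ≠ i), g j
      = ∑ j ∈ Finset.univ.filter (fun j => j < i), g j
        + ∑ j ∈ Finset.univ.filter (fun j => i < j), g j := by
  rw [Finset.sum_filter, Finset.sum_filter, Finset.sum_filter, ← Finset.sum_add_distrib]
  refine Finset.sum_congr rfl fun j _ => ?_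
  rcases lt_trichotomy j i with h|h|h
  · simp [h, h.ne, not_lt_of_gt h]
  · simp [h]
  · simp [h, h.ne', not_lt_of_gt h]

lemma swap_lt {n : ℕ} (f : Fin n → Fin n → ℝ) :
    ∑ i, ∑ j ∈ Finset.univ.filter (fun j => j < i), f i j
      = ∑ j, ∑ i ∈ Finset.univ.filter (fun i => j < i), f i j := by
  rw [Finset.sum_comm' (t' := Finset.univ) (s' := fun j => Finset.univ.filter (fun i => j < i))]
  intro x y
  simp

lemma vk_pow (d k : ℕ) (i : Fin (d+1)) (n : ℕ) (hn : 1 ≤ n) :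
    vk d k i ^ n = vk d k i := by
  unfold vk; split_ifs <;> simp [zero_pow (by omega : n ≠ 0)]

lemma vk_mul_self (d k : ℕ) (i : Fin (d+1)) : vk d k i * vk d k i = vk d k i := by
  unfold vk; split_ifs <;> ring

lemma P4eval_vk (d : ℕ) (a b : ℝ) (k : ℕ) (hkd : k ≤ d + 1) :
    P4eval d a b (vk d k)
      = k + a * ((k:ℝ)^2 - k) + b * (((k:ℝ)^2 - k)/2) := by
  set x := vk d k with hx
  have hS : ∑ i, x i = k := sum_vk d k hkd
  have h4 : ∑ i, x i ^ 4 = (k:ℝ) := by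
    rw [Finset.sum_congr rfl fun i _ => vk_pow d k i 4 (by norm_num)]; exact hS
  have hoff : ∑ i, ∑ j ∈ Finset.univ.filter (fun j => j ≠ i), x i * x j
      = (k:ℝ)^2 - k := by
    have : ∀ i : Fin (d+1), ∑ j ∈ Finset.univ.filter (fun j => j ≠ i), x i * x j
        = x i * (k:ℝ) - x i := by
      intro i
      rw [← Finset.mul_sum, split_ne, hS, mul_sub, vk_mul_self]
    rw [Finset.sum_congr rfl fun i _ => this i, Finset.sum_sub_distrib,
      ← Finset.sum_mul, hS]
    ring
  have h31 : ∑ i, ∑ j ∈ Finset.univ.filter (fun j => j ≠ i), x i ^ 3 * x j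
      = (k:ℝ)^2 - k := by
    rw [← hoff]
    exact Finset.sum_congr rfl fun i _ => Finset.sum_congr rfl fun j _ => by
      rw [vk_pow d k i 3 (by norm_num)]
  have hsym : ∑ i, ∑ j ∈ Finset.univ.filter (fun j => j < i), x i * x j
      = ∑ i, ∑ j ∈ Finset.univ.filter (fun j => i < j), x i * x j := by
    rw [swap_lt]
    exact Finset.sum_congr rfl fun i _ => Finset.sum_congr rfl fun j _ => mul_comm _ _
  have h22' : ∑ i, ∑ j ∈ Finset.univ.filter (fun j => i < j), x i * x j
      = ((k:ℝ)^2 - k)/2 := by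
    have h2 : (∑ i, ∑ j ∈ Finset.univ.filter (fun j => i < j), x i * x j) * 2
        = (k:ℝ)^2 - k := by
      rw [← hoff]
      rw [Finset.sum_congr rfl fun i _ => lt_split (fun j => x i * x j) i]
      rw [Finset.sum_add_distrib, hsym]
      ring
    linarith
  have h22 : ∑ i, ∑ j ∈ Finset.univ.filter (fun j => i < j), x i ^ 2 * x j ^ 2
      = ((k:ℝ)^2 - k)/2 := by
    rw [← h22']
    exact Finset.sum_congr rfl fun i _ => Finset.sum_congr rfl fun j _ => by
      rw [vk_pow d k i 2 (by norm_num), vk_pow d k j 2 (by norm_num)]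
  rw [P4eval, h4, h31, h22]

/-- The value of `P_4` at `v_k` and its strict positivity. -/
theorem P4_value_at_vk_pos
    (d : ℕ) (hd : 1 ≤ d) (γ : ℝ) (hγ : -1 < γ) (a b : ℝ)
    (ha : a = -(4 * (γ + 4)) / (d * (γ + 1)))
    (hb : b = 6 * (γ + 3) * (γ + 4) / (d * (γ + 1) * (γ + 2)))
    (k : ℕ) (hk1 : 1 ≤ k) (hkd : k ≤ d + 1) :
    P4eval d a b (vk d k)
        = (k : ℝ) * ((d : ℝ) * (γ + 1) * (γ + 2) + (1 - γ) * (γ + 4) * ((k : ℝ) - 1)) /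
            ((d : ℝ) * (γ + 1) * (γ + 2))
      ∧ 0 < (k : ℝ) * ((d : ℝ) * (γ + 1) * (γ + 2) + (1 - γ) * (γ + 4) * ((k : ℝ) - 1)) /
            ((d : ℝ) * (γ + 1) * (γ + 2)) := by
  have hd' : (1:ℝ) ≤ d := by exact_mod_cast hd
  have h1 : (0:ℝ) < γ + 1 := by linarith
  have h2 : (0:ℝ) < γ + 2 := by linarith
  have hD : (0:ℝ) < (d:ℝ) * (γ + 1) * (γ + 2) := by positivity
  have hk1' : (1:ℝ) ≤ (k:ℝ) := by exact_mod_cast hk1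
  have hkd' : (k:ℝ) ≤ (d:ℝ) + 1 := by exact_mod_cast hkd
  constructor
  · rw [P4eval_vk d a b k hkd]
    subst ha hb
    field_simp
    ring
  · apply div_pos _ hD
    have hN : 0 < (d : ℝ) * (γ + 1) * (γ + 2) + (1 - γ) * (γ + 4) * ((k : ℝ) - 1) := by
      rcases le_or_gt γ 1 with h|h
      · nlinarith [mul_nonneg (mul_nonneg (by linarith : (0:ℝ) ≤ 1 - γ)
          (by linarith : (0:ℝ) ≤ γ + 4)) (by linarith : (0:ℝ) ≤ (k:ℝ) - 1)]
      · nlinarith [mul_nonneg (mul_nonneg (by linarith : (0:ℝ) ≤ γ - 1)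
          (by linarith : (0:ℝ) ≤ γ + 4)) (by linarith : (0:ℝ) ≤ (d:ℝ) - ((k:ℝ) - 1))]
    positivity
end

section
/- Let d ≥ 1 and γ > −1. There do not exist N ≥ 1, points x_1,…,x_N ∈ T^d and strictly positive weights λ_1,…,λ_N such that (a) w_γ ∫_{T^d} f(x) W_γ(x) dx = Σ_{k=1}^N λ_k f(x_k) for every polynomial f of degree at most 4 in d variables, and (b) for every k, all nonzero coordinates of the homogeneous coordinate vector ξ_k = (x_k, 1−|x_k|_1) ∈ 𝒯^{d+1} are equal to one another. In particular, a symmetric cubature rule of degree n ≥ 4 for W_γ on T^d whose nodes are the centroid and permutation orbits of points (r,…,r,0,…,0) cannot be positive. -/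
open MeasureTheory Finset

/-! ### Auxiliary material -/

/-- The test function `F(x) = ∑ ξ_i³ - (∑ ξ_i²)²` in inhomogeneous coordinates. -/
noncomputable def Gfun (d : ℕ) (x : Fin d → ℝ) : ℝ :=
  ((∑ i, x i ^ 3) + (1 - ∑ i, x i) ^ 3) - ((∑ i, x i ^ 2) + (1 - ∑ i, x i) ^ 2) ^ 2

lemma sum_lift_pow (d : ℕ) (x : Fin d → ℝ) (k : ℕ) :
    ∑ i : Fin (d+1), lift d x i ^ k = (∑ i : Fin d, x i ^ k) + (1 - ∑ i, x i) ^ k := by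
  rw [Fin.sum_univ_castSucc]
  simp [lift]

lemma Gfun_eq (d : ℕ) (x : Fin d → ℝ) :
    Gfun d x = (∑ i : Fin (d+1), lift d x i ^ 3) - (∑ i : Fin (d+1), lift d x i ^ 2) ^ 2 := by
  rw [sum_lift_pow, sum_lift_pow]; rfl

lemma Gfun_cont (d : ℕ) : Continuous (Gfun d) := by
  unfold Gfun; fun_prop

/-- The test polynomial whose evaluation is `Gfun`. -/
noncomputable def Pf (d : ℕ) : MvPolynomial (Fin d) ℝ :=
  ((∑ i, MvPolynomial.X i ^ 3) + (1 - ∑ i, MvPolynomial.X i) ^ 3)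
  - ((∑ i, MvPolynomial.X i ^ 2) + (1 - ∑ i, MvPolynomial.X i) ^ 2) ^ 2

lemma eval_Pf (d : ℕ) (x : Fin d → ℝ) :
    MvPolynomial.eval x (Pf d) = Gfun d x := by
  simp [Pf, Gfun]

lemma deg_Pf (d : ℕ) : (Pf d).totalDegree ≤ 4 := by
  have hX : ∀ (i : Fin d) (k : ℕ),
      ((MvPolynomial.X i : MvPolynomial (Fin d) ℝ) ^ k).totalDegree ≤ k := by
    intro i k
    calc ((MvPolynomial.X i : MvPolynomial (Fin d) ℝ) ^ k).totalDegree
        ≤ k * (MvPolynomial.X i : MvPolynomial (Fin d) ℝ).totalDegree :=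
          MvPolynomial.totalDegree_pow _ _
      _ = k := by rw [MvPolynomial.totalDegree_X]; ring
  have hS : (∑ i : Fin d, (MvPolynomial.X i : MvPolynomial (Fin d) ℝ)).totalDegree ≤ 1 := by
    refine le_trans (MvPolynomial.totalDegree_finset_sum _ _) (Finset.sup_le fun i _ => ?_)
    simpa using (hX i 1)
  have hq : ((1 : MvPolynomial (Fin d) ℝ) - ∑ i, MvPolynomial.X i).totalDegree ≤ 1 := by
    rw [sub_eq_add_neg]
    refine le_trans (MvPolynomial.totalDegree_add _ _) (max_le ?_ ?_)
    · simp [MvPolynomial.totalDegree_one]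
    · rw [MvPolynomial.totalDegree_neg]; exact hS
  have hSk : ∀ k : ℕ,
      (∑ i : Fin d, (MvPolynomial.X i : MvPolynomial (Fin d) ℝ) ^ k).totalDegree ≤ k := by
    intro k
    exact le_trans (MvPolynomial.totalDegree_finset_sum _ _) (Finset.sup_le fun i _ => hX i k)
  have hqk : ∀ k : ℕ,
      (((1 : MvPolynomial (Fin d) ℝ) - ∑ i, MvPolynomial.X i) ^ k).totalDegree ≤ k := by
    intro k
    calc (((1 : MvPolynomial (Fin d) ℝ) - ∑ i, MvPolynomial.X i) ^ k).totalDegree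
        ≤ k * ((1 : MvPolynomial (Fin d) ℝ) - ∑ i, MvPolynomial.X i).totalDegree :=
          MvPolynomial.totalDegree_pow _ _
      _ ≤ k * 1 := Nat.mul_le_mul_left k hq
      _ = k := by ring
  have h3 : ((∑ i : Fin d, (MvPolynomial.X i : MvPolynomial (Fin d) ℝ) ^ 3)
      + ((1 : MvPolynomial (Fin d) ℝ) - ∑ i, MvPolynomial.X i) ^ 3).totalDegree ≤ 3 :=
    le_trans (MvPolynomial.totalDegree_add _ _) (max_le (hSk 3) (hqk 3))
  have h2 : ((∑ i : Fin d, (MvPolynomial.X i : MvPolynomial (Fin d) ℝ) ^ 2)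
      + ((1 : MvPolynomial (Fin d) ℝ) - ∑ i, MvPolynomial.X i) ^ 2).totalDegree ≤ 2 :=
    le_trans (MvPolynomial.totalDegree_add _ _) (max_le (hSk 2) (hqk 2))
  have h4 : (((∑ i : Fin d, (MvPolynomial.X i : MvPolynomial (Fin d) ℝ) ^ 2)
      + ((1 : MvPolynomial (Fin d) ℝ) - ∑ i, MvPolynomial.X i) ^ 2) ^ 2).totalDegree ≤ 4 := by
    refine le_trans (MvPolynomial.totalDegree_pow _ _) ?_
    omega
  unfold Pf
  rw [sub_eq_add_neg]
  refine le_trans (MvPolynomial.totalDegree_add _ _) (max_le (le_trans h3 (by norm_num)) ?_)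
  rw [MvPolynomial.totalDegree_neg]; exact h4

lemma lift_nonneg (d : ℕ) {x : Fin d → ℝ} (hx : x ∈ Td d) (i : Fin (d+1)) :
    0 ≤ lift d x i := by
  induction i using Fin.lastCases with
  | last => simp only [lift, Fin.snoc_last]; linarith [hx.2]
  | cast i => simpa only [lift, Fin.snoc_castSucc] using hx.1 i

lemma lift_sum (d : ℕ) (x : Fin d → ℝ) : ∑ i, lift d x i = 1 := by
  rw [Fin.sum_univ_castSucc]
  simp [lift]

/-- Cauchy–Schwarz: `F ≥ 0` on the simplex. -/
lemma F_nonneg (d : ℕ) {x : Fin d → ℝ} (hx : x ∈ Td d) :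
    0 ≤ (∑ i : Fin (d+1), lift d x i ^ 3) - (∑ i : Fin (d+1), lift d x i ^ 2) ^ 2 := by
  set ξ := lift d x with hξdef
  have hξ : ∀ i, 0 ≤ ξ i := lift_nonneg d hx
  have cs := Finset.sum_mul_sq_le_sq_mul_sq Finset.univ
    (fun i => Real.sqrt (ξ i)) (fun i => ξ i * Real.sqrt (ξ i))
  have e1 : ∑ i, Real.sqrt (ξ i) * (ξ i * Real.sqrt (ξ i)) = ∑ i, ξ i ^ 2 := by
    refine Finset.sum_congr rfl fun i _ => ?_
    have : Real.sqrt (ξ i) * (ξ i * Real.sqrt (ξ i)) = ξ i * (Real.sqrt (ξ i) ^ 2) := by ring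
    rw [this, Real.sq_sqrt (hξ i)]; ring
  have e2 : ∑ i, Real.sqrt (ξ i) ^ 2 = ∑ i, ξ i :=
    Finset.sum_congr rfl fun i _ => Real.sq_sqrt (hξ i)
  have e3 : ∑ i, (ξ i * Real.sqrt (ξ i)) ^ 2 = ∑ i, ξ i ^ 3 := by
    refine Finset.sum_congr rfl fun i _ => ?_
    rw [mul_pow, Real.sq_sqrt (hξ i)]; ring
  rw [e1, e2, e3, lift_sum, one_mul] at cs
  linarith

lemma F_le_one (d : ℕ) {x : Fin d → ℝ} (hx : x ∈ Td d) :
    (∑ i : Fin (d+1), lift d x i ^ 3) - (∑ i : Fin (d+1), lift d x i ^ 2) ^ 2 ≤ 1 := by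
  set ξ := lift d x with hξdef
  have hξ : ∀ i, 0 ≤ ξ i := lift_nonneg d hx
  have hle1 : ∀ i, ξ i ≤ 1 := by
    intro i
    calc ξ i ≤ ∑ j, ξ j := Finset.single_le_sum (fun j _ => hξ j) (Finset.mem_univ i)
      _ = 1 := lift_sum d x
  have h3 : ∑ i, ξ i ^ 3 ≤ ∑ i, ξ i := by
    refine Finset.sum_le_sum fun i _ => ?_
    calc ξ i ^ 3 ≤ ξ i ^ 1 := pow_le_pow_of_le_one (hξ i) (hle1 i) (by norm_num)
      _ = ξ i := pow_one _
  have h2 : 0 ≤ (∑ i, ξ i ^ 2) ^ 2 := sq_nonneg _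
  rw [lift_sum] at h3
  linarith

/-- `F` vanishes at nodes whose nonzero homogeneous coordinates are all equal. -/
lemma F_node_zero (d : ℕ) {x : Fin d → ℝ}
    (heq : ∀ i j, lift d x i ≠ 0 → lift d x j ≠ 0 → lift d x i = lift d x j) :
    (∑ i : Fin (d+1), lift d x i ^ 3) - (∑ i : Fin (d+1), lift d x i ^ 2) ^ 2 = 0 := by
  set ξ := lift d x with hξdef
  have hsum : ∑ i, ξ i = 1 := lift_sum d x
  have hex : ∃ j, ξ j ≠ 0 := by
    by_contra h
    push_neg at h
    rw [Finset.sum_eq_zero (fun i _ => h i)] at hsum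
    norm_num at hsum
  obtain ⟨j, hj⟩ := hex
  set c := ξ j with hc
  have key : ∀ i, ξ i = 0 ∨ ξ i = c := by
    intro i
    by_cases h : ξ i = 0
    · exact Or.inl h
    · exact Or.inr (heq i j h hj)
  have h2 : ∑ i, ξ i ^ 2 = c := by
    have : ∀ i ∈ Finset.univ, ξ i ^ 2 = c * ξ i := by
      intro i _
      rcases key i with h | h <;> rw [h] <;> ring
    rw [Finset.sum_congr rfl this, ← Finset.mul_sum, hsum, mul_one]
  have h3 : ∑ i, ξ i ^ 3 = c ^ 2 := by
    have : ∀ i ∈ Finset.univ, ξ i ^ 3 = c ^ 2 * ξ i := by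
      intro i _
      rcases key i with h | h <;> rw [h] <;> ring
    rw [Finset.sum_congr rfl this, ← Finset.mul_sum, hsum, mul_one]
  rw [h2, h3]; ring

lemma witness_sum (d : ℕ) (hd : 1 ≤ d) : ∑ _i : Fin d, 1/(3*(d:ℝ)) = 1/3 := by
  have hc0 : (0:ℝ) < d := by exact_mod_cast hd
  rw [Finset.sum_const, Finset.card_univ, Fintype.card_fin, nsmul_eq_mul]
  field_simp

/-- `F` is strictly positive at the interior witness point `(1/(3d),…,1/(3d))`. -/
lemma F_pos_at_witness (d : ℕ) (hd : 1 ≤ d) :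
    0 < (∑ i : Fin (d+1), lift d (fun _ => 1/(3*(d:ℝ))) i ^ 3)
        - (∑ i : Fin (d+1), lift d (fun _ => 1/(3*(d:ℝ))) i ^ 2) ^ 2 := by
  have hc0 : (0:ℝ) < d := by exact_mod_cast hd
  have hc1 : (1:ℝ) ≤ d := by exact_mod_cast hd
  have hsum1 := witness_sum d hd
  have hsumk : ∀ k : ℕ, ∑ _i : Fin d, (1/(3*(d:ℝ)))^k = (d:ℝ) * (1/(3*(d:ℝ)))^k := by
    intro k
    rw [Finset.sum_const, Finset.card_univ, Fintype.card_fin, nsmul_eq_mul]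
  have e3 : ∑ i : Fin (d+1), lift d (fun _ => 1/(3*(d:ℝ))) i ^ 3
      = (d:ℝ) * (1/(3*(d:ℝ)))^3 + (2/3)^3 := by
    rw [Fin.sum_univ_castSucc]
    simp only [lift, Fin.snoc_castSucc, Fin.snoc_last, hsum1, hsumk]
    norm_num
  have e2 : ∑ i : Fin (d+1), lift d (fun _ => 1/(3*(d:ℝ))) i ^ 2
      = (d:ℝ) * (1/(3*(d:ℝ)))^2 + (2/3)^2 := by
    rw [Fin.sum_univ_castSucc]
    simp only [lift, Fin.snoc_castSucc, Fin.snoc_last, hsum1, hsumk]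
    norm_num
  rw [e2, e3]
  have key : (d:ℝ) * (1/(3*(d:ℝ)))^3 + (2/3)^3 - ((d:ℝ) * (1/(3*(d:ℝ)))^2 + (2/3)^2)^2
      = 2*(2*(d:ℝ)-1)^2/(81*(d:ℝ)^2) := by
    field_simp
    ring
  rw [key]
  have : (0:ℝ) < (2*(d:ℝ)-1)^2 := by nlinarith
  positivity

lemma Td_closed (d : ℕ) : IsClosed (Td d) := by
  have : Td d = (⋂ i, {x : Fin d → ℝ | 0 ≤ x i}) ∩ {x : Fin d → ℝ | ∑ i, x i ≤ 1} := by
    ext x; simp [Td, Set.mem_iInter]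
  rw [this]
  refine IsClosed.inter (isClosed_iInter fun i => ?_) ?_
  · exact isClosed_le continuous_const (continuous_apply i)
  · exact isClosed_le (continuous_finset_sum _ fun i _ => continuous_apply i) continuous_const

lemma Td_meas (d : ℕ) : MeasurableSet (Td d) := (Td_closed d).measurableSet

lemma Wg_meas (d : ℕ) (γ : ℝ) : Measurable (Wg d γ) := by
  unfold Wg; fun_prop

lemma Wg_nonneg (d : ℕ) (γ : ℝ) {y : Fin d → ℝ} (hy : y ∈ Td d) : 0 ≤ Wg d γ y := by
  unfold Wg
  apply Real.rpow_nonneg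
  have h1 : 0 ≤ ∏ i, y i := Finset.prod_nonneg fun i _ => hy.1 i
  have h2 : 0 ≤ 1 - ∑ i, y i := by linarith [hy.2]
  exact mul_nonneg h1 h2

/-- There is no positive cubature rule of degree `4` for `W_γ` on `T^d` all of whose nodes,
in homogeneous coordinates, have all their nonzero coordinates equal (i.e. nodes of the form
`(r,…,r,0,…,0)` up to permutation, including the centroid). -/
theorem no_positive_cubature_equal_coordinates
    (d : ℕ) (hd : 1 ≤ d) (γ : ℝ) (hγ : -1 < γ) :
    ¬ ∃ (N : ℕ) (_ : 1 ≤ N) (x : Fin N → (Fin d → ℝ)) (lam : Fin N → ℝ),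
        (∀ k, x k ∈ Td d) ∧
        (∀ k, 0 < lam k) ∧
        (∀ f : MvPolynomial (Fin d) ℝ, f.totalDegree ≤ 4 →
          wg d γ * ∫ y in Td d, MvPolynomial.eval y f * Wg d γ y
            = ∑ k, lam k * MvPolynomial.eval (x k) f) ∧
        (∀ k, ∀ i j, lift d (x k) i ≠ 0 → lift d (x k) j ≠ 0 →
          lift d (x k) i = lift d (x k) j) := by
  rintro ⟨N, hN, x, lam, hTd, hlam, hquad, hnode⟩
  haveI hNe : Nonempty (Fin N) := ⟨⟨0, hN⟩⟩
  have hα : (0:ℝ) < γ + 1 := by linarith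
  have hwg : 0 < wg d γ := by
    unfold wg
    exact div_pos (Real.Gamma_pos_of_pos (mul_pos (by positivity) hα))
      (pow_pos (Real.Gamma_pos_of_pos hα) _)
  -- Step 1: W is integrable on Td (from the rule applied to f = 1).
  have hone := hquad 1 (by simp)
  simp only [map_one, one_mul, mul_one] at hone
  have hsumpos : 0 < ∑ k, lam k := Finset.sum_pos (fun k _ => hlam k) Finset.univ_nonempty
  have hIW : IntegrableOn (Wg d γ) (Td d) := by
    by_contra h
    rw [integral_undef h, mul_zero] at hone
    linarith
  -- Step 2: the rule applied to the test polynomial gives a zero integral.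
  have hP := hquad (Pf d) (deg_Pf d)
  have hRHS : ∑ k, lam k * MvPolynomial.eval (x k) (Pf d) = 0 := by
    refine Finset.sum_eq_zero fun k _ => ?_
    rw [eval_Pf, Gfun_eq, F_node_zero d (hnode k), mul_zero]
  rw [hRHS] at hP
  simp only [eval_Pf] at hP
  have hint0 : ∫ y in Td d, Gfun d y * Wg d γ y = 0 := by
    rcases mul_eq_zero.1 hP with h | h
    · exact absurd h (ne_of_gt hwg)
    · exact h
  -- Step 3: G·W is integrable on Td.
  have hGW_meas : AEStronglyMeasurable (fun y => Gfun d y * Wg d γ y)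
      (volume.restrict (Td d)) :=
    ((Gfun_cont d).measurable.mul (Wg_meas d γ)).aestronglyMeasurable
  have hIGW : IntegrableOn (fun y => Gfun d y * Wg d γ y) (Td d) := by
    refine Integrable.mono hIW hGW_meas ?_
    rw [ae_restrict_iff' (Td_meas d)]
    filter_upwards with y hy
    have h0 : 0 ≤ Gfun d y := by rw [Gfun_eq]; exact F_nonneg d hy
    have h1 : Gfun d y ≤ 1 := by rw [Gfun_eq]; exact F_le_one d hy
    have hW := Wg_nonneg d γ hy
    rw [Real.norm_eq_abs, Real.norm_eq_abs, abs_of_nonneg (mul_nonneg h0 hW),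
      abs_of_nonneg hW]
    nlinarith
  -- Step 4: nonnegativity a.e.
  have hnn : 0 ≤ᶠ[ae (volume.restrict (Td d))] fun y => Gfun d y * Wg d γ y := by
    have : ∀ᵐ y ∂(volume.restrict (Td d)), 0 ≤ Gfun d y * Wg d γ y := by
      rw [ae_restrict_iff' (Td_meas d)]
      filter_upwards with y hy
      have h0 : 0 ≤ Gfun d y := by rw [Gfun_eq]; exact F_nonneg d hy
      exact mul_nonneg h0 (Wg_nonneg d γ hy)
    exact this
  -- Step 5: strict positivity of the integral, contradiction.
  have hpos : 0 < ∫ y in Td d, Gfun d y * Wg d γ y := by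
    rw [setIntegral_pos_iff_support_of_nonneg_ae hnn hIGW]
    set x0 : Fin d → ℝ := fun _ => 1/(3*(d:ℝ)) with hx0def
    have hc0 : (0:ℝ) < d := by exact_mod_cast hd
    set U : Set (Fin d → ℝ) :=
      ((⋂ i, {y : Fin d → ℝ | 0 < y i}) ∩ {y : Fin d → ℝ | ∑ i, y i < 1})
        ∩ {y : Fin d → ℝ | 0 < Gfun d y} with hUdef
    have hUopen : IsOpen U := by
      refine IsOpen.inter (IsOpen.inter (isOpen_iInter_of_finite fun i => ?_) ?_) ?_
      · exact isOpen_lt continuous_const (continuous_apply i)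
      · exact isOpen_lt (continuous_finset_sum _ fun i _ => continuous_apply i) continuous_const
      · exact isOpen_lt continuous_const (Gfun_cont d)
    have hx0U : x0 ∈ U := by
      refine ⟨⟨Set.mem_iInter.2 fun i => ?_, ?_⟩, ?_⟩
      · show (0:ℝ) < 1/(3*(d:ℝ)); positivity
      · show ∑ _i : Fin d, 1/(3*(d:ℝ)) < 1
        rw [witness_sum d hd]; norm_num
      · show 0 < Gfun d x0
        rw [Gfun_eq]
        exact F_pos_at_witness d hd
    have hUsub : U ⊆ Function.support (fun y => Gfun d y * Wg d γ y) ∩ Td d := by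
      rintro y ⟨⟨hy1, hy2⟩, hy3⟩
      rw [Set.mem_iInter] at hy1
      have hyTd : y ∈ Td d := ⟨fun i => le_of_lt (hy1 i), le_of_lt hy2⟩
      refine ⟨?_, hyTd⟩
      have hy2' : ∑ i, y i < 1 := hy2
      have hWpos : 0 < Wg d γ y := by
        apply Real.rpow_pos_of_pos
        exact mul_pos (Finset.prod_pos fun i _ => hy1 i) (by linarith)
      exact ne_of_gt (mul_pos hy3 hWpos)
    exact lt_of_lt_of_le (hUopen.measure_pos volume ⟨x0, hx0U⟩) (measure_mono hUsub)
  exact absurd hint0 (ne_of_gt hpos)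
end

section
/- (Hurwitz's identity.) For all real x_1, x_2, x_3, x_4: 5040·(x_1²+x_2²+x_3²+x_4²)⁴ = 6·Σ_{i=1}^4 (2x_i)⁸ + 60·Σ_{1≤i<j≤4} [ (x_i+x_j)⁸ + (x_i−x_j)⁸ ] + Σ_{i=1}^4 Σ_{ {j,k}⊆{1,2,3,4}∖{i}, j<k } Σ_{ε,δ∈{−1,1}} (2x_i + ε x_j + δ x_k)⁸ + 6·Σ_{(ε_2,ε_3,ε_4)∈{−1,1}³} (x_1 + ε_2 x_2 + ε_3 x_3 + ε_4 x_4)⁸. -/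
open MeasureTheory Finset

set_option maxHeartbeats 4000000 in
/-- Hurwitz's identity: a representation of `(x₁²+x₂²+x₃²+x₄²)⁴` as a rational linear
combination of eighth powers of linear forms. -/
theorem hurwitz_identity (x : Fin 4 → ℝ) :
    5040 * (∑ i, x i ^ 2) ^ 4
      = 6 * (∑ i, (2 * x i) ^ 8)
        + 60 * (∑ i, ∑ j ∈ Finset.univ.filter (fun j => i < j),
            ((x i + x j) ^ 8 + (x i - x j) ^ 8))
        + (∑ i, ∑ j ∈ Finset.univ.filter (fun j => j ≠ i),
            ∑ l ∈ Finset.univ.filter (fun l => l ≠ i ∧ j < l),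
              ∑ ε ∈ ({-1, 1} : Finset ℝ), ∑ δ ∈ ({-1, 1} : Finset ℝ),
                (2 * x i + ε * x j + δ * x l) ^ 8)
        + 6 * (∑ ε ∈ ({-1, 1} : Finset ℝ), ∑ δ ∈ ({-1, 1} : Finset ℝ),
            ∑ η ∈ ({-1, 1} : Finset ℝ),
              (x 0 + ε * x 1 + δ * x 2 + η * x 3) ^ 8) := by
  simp only [Finset.sum_filter, Fin.sum_univ_four]
  simp only [Fin.isValue, Fin.reduceLT, Fin.reduceEq, Fin.reduceNe, ne_eq, not_true, not_false_iff, true_and,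
    and_true, false_and, and_false, if_true, if_false, ite_true, ite_false, add_zero, zero_add]
  simp only [Finset.sum_pair (by norm_num : (-1:ℝ) ≠ 1)]
  ring
end
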